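/- arXiv:1006.1095 — 5 statements merged into one kernel-verified Lean document; each statement's English description precedes it below -/
import Mathlib

section
/- Let (X, δ) be a diversity and f ∈ T_X. Then: (1) f(A) ≥ δ(A) for all finite A ⊆ X; (2) f is monotone, i.e. f(A) ≤ f(B) whenever A ⊆ B ⊆ X with B finite; (3) f is sub-additive, i.e. f(A ∪ B) ≤ f(A) + f(B) for all finite A, B ⊆ X. -/
open scoped Classical

noncomputable section

/-- A diversity: axioms (D1) and (D2). -/
def IsDiversity {X : Type*} (δ : Finset X → ℝ) : Prop :=
  (∀ A, 0 ≤ δ A) ∧ (∀ A, δ A = 0 ↔ A.card ≤ 1) ∧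
    ∀ A B C : Finset X, B ≠ ∅ → δ (A ∪ C) ≤ δ (A ∪ B) + δ (B ∪ C)

/-- Membership in `P_X`: `f ∅ = 0` and `Σ_{A ∈ 𝓐} f A ≥ δ (⋃ 𝓐)` for every finite
collection `𝓐` of finite subsets of `X`. -/
def MemP {X : Type*} (δ : Finset X → ℝ) (f : Finset X → ℝ) : Prop :=
  f ∅ = 0 ∧ ∀ 𝓐 : Finset (Finset X), δ (𝓐.sup id) ≤ ∑ A ∈ 𝓐, f A

/-- Membership in the tight span `T_X`: the pointwise-minimal elements of `P_X`. -/
def MemT {X : Type*} (δ : Finset X → ℝ) (f : Finset X → ℝ) : Prop :=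
  MemP δ f ∧ ∀ g : Finset X → ℝ, MemP δ g → (∀ A, g A ≤ f A) → g = f

/-- (1): elements of `P_X` dominate `δ`. -/
lemma memP_ge {X : Type*} (δ : Finset X → ℝ) (f : Finset X → ℝ) (hf : MemP δ f)
    (A : Finset X) : δ A ≤ f A := by
  have := hf.2 {A}
  simpa using this

lemma memP_nonneg {X : Type*} (δ : Finset X → ℝ) (hδ : IsDiversity δ)
    (f : Finset X → ℝ) (hf : MemP δ f) (A : Finset X) : 0 ≤ f A :=
  le_trans (hδ.1 A) (memP_ge δ f hf A)

/-- Diversities are monotone. -/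
lemma diversity_mono {X : Type*} (δ : Finset X → ℝ) (hδ : IsDiversity δ)
    {A B : Finset X} (h : A ⊆ B) : δ A ≤ δ B := by
  have step : ∀ (C : Finset X) (b : X), δ C ≤ δ (insert b C) := by
    intro C b
    have h2 := hδ.2.2 C {b} ∅ (by simp)
    have hb : δ {b} = 0 := (hδ.2.1 {b}).2 (by simp)
    simp only [Finset.union_empty] at h2
    calc δ C ≤ δ (C ∪ {b}) + δ {b} := h2
      _ = δ (insert b C) := by rw [hb, add_zero, Finset.union_comm]; rw [Finset.insert_eq]
  have key : ∀ s : Finset X, δ A ≤ δ (A ∪ s) := by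
    intro s
    induction s using Finset.induction_on with
    | empty => simp
    | insert b s' hb ih =>
      calc δ A ≤ δ (A ∪ s') := ih
        _ ≤ δ (insert b (A ∪ s')) := step _ _
        _ = δ (A ∪ insert b s') := by rw [Finset.union_insert]
  have := key (B \ A)
  rwa [Finset.union_sdiff_of_subset h] at this

lemma sum_insert_le' {X : Type*} (f : Finset X → ℝ) (hf : ∀ C, 0 ≤ f C)
    (a : Finset X) (s : Finset (Finset X)) :
    ∑ C ∈ insert a s, f C ≤ f a + ∑ C ∈ s, f C := by
  by_cases h : a ∈ s
  · rw [Finset.insert_eq_self.2 h]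
    exact le_add_of_nonneg_left (hf a)
  · rw [Finset.sum_insert h]

/-- Key minimality argument: if for every collection `S` we can bound
`δ (sup (insert A₀ S))` by `v + Σ_S f`, then `f A₀ ≤ v`. -/
lemma minimal_le {X : Type*} (δ : Finset X → ℝ) (hδ : IsDiversity δ)
    (f : Finset X → ℝ) (hf : MemT δ f) (A₀ : Finset X) (v : ℝ) (hv : 0 ≤ v)
    (h : ∀ S : Finset (Finset X), δ ((insert A₀ S).sup id) ≤ v + ∑ C ∈ S, f C) :
    f A₀ ≤ v := by
  set g : Finset X → ℝ := fun C => if C = A₀ then min (f A₀) v else f C with hg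
  have hgle : ∀ C, g C ≤ f C := by
    intro C
    simp only [hg]
    split
    · rename_i hC; rw [hC]; exact min_le_left _ _
    · exact le_refl _
  have hgP : MemP δ g := by
    constructor
    · simp only [hg]
      split
      · rename_i h0
        rw [← h0, hf.1.1]
        exact min_eq_left hv
      · exact hf.1.1
    · intro 𝓐
      by_cases hA : A₀ ∈ 𝓐
      · have herase : ∀ C ∈ 𝓐.erase A₀, g C = f C := by
          intro C hC
          have : C ≠ A₀ := Finset.ne_of_mem_erase hC
          simp [hg, this]
        have hsum : ∑ C ∈ 𝓐, g C = min (f A₀) v + ∑ C ∈ 𝓐.erase A₀, f C := by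
          rw [← Finset.add_sum_erase _ g hA, Finset.sum_congr rfl herase]
          simp [hg]
        have h1 : δ (𝓐.sup id) ≤ f A₀ + ∑ C ∈ 𝓐.erase A₀, f C := by
          have := hf.1.2 𝓐
          rwa [← Finset.add_sum_erase _ f hA] at this
        have h2 : δ (𝓐.sup id) ≤ v + ∑ C ∈ 𝓐.erase A₀, f C := by
          have := h (𝓐.erase A₀)
          rwa [Finset.insert_erase hA] at this
        rw [hsum]
        rcases le_total (f A₀) v with hmv | hmv
        · rw [min_eq_left hmv]; exact h1
        · rw [min_eq_right hmv]; exact h2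
      · have : ∑ C ∈ 𝓐, g C = ∑ C ∈ 𝓐, f C := by
          apply Finset.sum_congr rfl
          intro C hC
          have : C ≠ A₀ := fun h' => hA (h' ▸ hC)
          simp [hg, this]
        rw [this]
        exact hf.1.2 𝓐
  have := hf.2 g hgP hgle
  have heval : g A₀ = f A₀ := by rw [this]
  simp only [hg, if_pos rfl] at heval
  exact min_eq_left_iff.1 heval

/-- if `f ∈ T_X` then (1) `f A ≥ δ A`; (2) `f` is monotone;
(3) `f` is sub-additive. -/
theorem tightSpan_member_basics {X : Type*} (δ : Finset X → ℝ) (hδ : IsDiversity δ)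
    (f : Finset X → ℝ) (hf : MemT δ f) :
    (∀ A : Finset X, δ A ≤ f A) ∧
    (∀ A B : Finset X, A ⊆ B → f A ≤ f B) ∧
    (∀ A B : Finset X, f (A ∪ B) ≤ f A + f B) := by
  have hnn : ∀ C, 0 ≤ f C := memP_nonneg δ hδ f hf.1
  refine ⟨fun A => memP_ge δ f hf.1 A, ?_, ?_⟩
  · intro A B hAB
    apply minimal_le δ hδ f hf A (f B) (hnn B)
    intro S
    calc δ ((insert A S).sup id) ≤ δ ((insert B S).sup id) := by
          apply diversity_mono δ hδ
          simp only [Finset.sup_insert, id]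
          exact Finset.union_subset_union_left hAB
      _ ≤ ∑ C ∈ insert B S, f C := hf.1.2 _
      _ ≤ f B + ∑ C ∈ S, f C := sum_insert_le' f hnn B S
  · intro A B
    apply minimal_le δ hδ f hf (A ∪ B) (f A + f B) (add_nonneg (hnn A) (hnn B))
    intro S
    have hsup : (insert (A ∪ B) S).sup id = (insert A (insert B S)).sup id := by
      simp only [Finset.sup_insert, id]
      rw [← sup_assoc]
      rfl
    calc δ ((insert (A ∪ B) S).sup id) = δ ((insert A (insert B S)).sup id) := by rw [hsup]
      _ ≤ ∑ C ∈ insert A (insert B S), f C := hf.1.2 _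
      _ ≤ f A + ∑ C ∈ insert B S, f C := sum_insert_le' f hnn _ _
      _ ≤ f A + (f B + ∑ C ∈ S, f C) := by
          exact add_le_add le_rfl (sum_insert_le' f hnn _ _)
      _ = f A + f B + ∑ C ∈ S, f C := by ring

end
end

section
/- Let (X, δ) be a diversity and f ∈ T_X. Then: (1) f(A ∪ C) ≤ δ(A ∪ B) + f(B ∪ C) for all finite A, B, C ⊆ X with B ≠ ∅; (2) for every finite A ⊆ X, f(A) = sup over finite B ⊆ X of [ δ(A ∪ B) − f(B) ]. -/
open scoped Classical

noncomputable section

private lemma sum_union_le_aux {α : Type*} [DecidableEq α] (f : α → ℝ) (hf : ∀ a, 0 ≤ f a)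
    (s t : Finset α) : ∑ x ∈ s ∪ t, f x ≤ ∑ x ∈ s, f x + ∑ x ∈ t, f x := by
  rw [← Finset.union_sdiff_self_eq_union, Finset.sum_union Finset.disjoint_sdiff]
  have : ∑ x ∈ t \ s, f x ≤ ∑ x ∈ t, f x :=
    Finset.sum_le_sum_of_subset_of_nonneg (Finset.sdiff_subset) (fun i _ _ => hf i)
  linarith

private lemma sum_biUnion_le_aux {α β : Type*} [DecidableEq β] (f : β → ℝ) (hf : ∀ a, 0 ≤ f a)
    (s : Finset α) (t : α → Finset β) :
    ∑ x ∈ s.biUnion t, f x ≤ ∑ a ∈ s, ∑ x ∈ t a, f x := by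
  classical
  induction s using Finset.induction_on with
  | empty => simp
  | @insert a s' h ih =>
    rw [Finset.biUnion_insert, Finset.sum_insert h]
    calc ∑ x ∈ t a ∪ s'.biUnion t, f x
        ≤ ∑ x ∈ t a, f x + ∑ x ∈ s'.biUnion t, f x := sum_union_le_aux f hf _ _
      _ ≤ ∑ x ∈ t a, f x + ∑ a' ∈ s', ∑ x ∈ t a', f x := by linarith

/-- if `f ∈ T_X` then
(1) `f (A ∪ C) ≤ δ (A ∪ B) + f (B ∪ C)` for finite `A B C ⊆ X` with `B ≠ ∅`;
(2) `f A = sup { δ (A ∪ B) - f B : B a finite subset of X }`. -/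
theorem tightSpan_member_triangle_and_sup {X : Type*} (δ : Finset X → ℝ)
    (hδ : IsDiversity δ) (f : Finset X → ℝ) (hf : MemT δ f) :
    (∀ A B C : Finset X, B ≠ ∅ → f (A ∪ C) ≤ δ (A ∪ B) + f (B ∪ C)) ∧
    (∀ A : Finset X, f A = sSup {r : ℝ | ∃ B : Finset X, r = δ (A ∪ B) - f B}) := by
  classical
  obtain ⟨⟨hf0, hfsum⟩, hfmin⟩ := hf
  obtain ⟨hδ0, hδcard, hδtri⟩ := hδ
  have hδe : δ ∅ = 0 := (hδcard ∅).mpr (by simp)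
  have hfδ : ∀ A, δ A ≤ f A := by
    intro A
    have h := hfsum {A}
    simpa using h
  have hfnn : ∀ A, 0 ≤ f A := fun A => le_trans (hδ0 A) (hfδ A)
  -- pair inequality : δ (A ∪ B) ≤ f A + f B
  have hpair : ∀ A B : Finset X, δ (A ∪ B) ≤ f A + f B := by
    intro A B
    by_cases h : A = B
    · subst h
      have : δ (A ∪ A) = δ A := by rw [Finset.union_self]
      rw [this]
      linarith [hfδ A, hfnn A]
    · have h2 := hfsum {A, B}
      rw [Finset.sup_insert, Finset.sup_singleton, Finset.sum_pair h] at h2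
      simpa using h2
  -- subadditivity over collections, via minimality
  have hTne : ∀ C : Finset X,
      ({r | ∃ 𝓑 : Finset (Finset X), 𝓑.sup id = C ∧ r = ∑ B ∈ 𝓑, f B} : Set ℝ).Nonempty :=
    fun C => ⟨f C, {C}, by simp, by simp⟩
  have hTbdd : ∀ C : Finset X,
      BddBelow ({r | ∃ 𝓑 : Finset (Finset X), 𝓑.sup id = C ∧ r = ∑ B ∈ 𝓑, f B} : Set ℝ) := by
    intro C
    refine ⟨0, ?_⟩
    rintro r ⟨𝓑, -, rfl⟩
    exact Finset.sum_nonneg fun B _ => hfnn B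
  set g : Finset X → ℝ :=
    fun C => sInf {r | ∃ 𝓑 : Finset (Finset X), 𝓑.sup id = C ∧ r = ∑ B ∈ 𝓑, f B} with hg
  have hgle : ∀ C, g C ≤ f C := fun C => csInf_le (hTbdd C) ⟨{C}, by simp, by simp⟩
  have hgnn : ∀ C, 0 ≤ g C := fun C => le_csInf (hTne C)
    (by rintro r ⟨𝓑, -, rfl⟩; exact Finset.sum_nonneg fun B _ => hfnn B)
  have hgP : MemP δ g := by
    constructor
    · exact le_antisymm (le_trans (hgle ∅) (le_of_eq hf0)) (hgnn ∅)
    · intro 𝓒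
      refine le_of_forall_pos_le_add ?_
      intro ε hε
      set ε' := ε / (𝓒.card + 1) with hε'
      have hε'pos : 0 < ε' := by positivity
      have H : ∀ C : Finset X, ∃ 𝓑 : Finset (Finset X),
          𝓑.sup id = C ∧ ∑ B ∈ 𝓑, f B ≤ g C + ε' := by
        intro C
        have h1 : sInf {r | ∃ 𝓑 : Finset (Finset X), 𝓑.sup id = C ∧ r = ∑ B ∈ 𝓑, f B}
            < g C + ε' := by
          rw [hg]; linarith
        obtain ⟨r, hrmem, hrlt⟩ := exists_lt_of_csInf_lt (hTne C) h1
        obtain ⟨𝓑, h𝓑, rfl⟩ := hrmem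
        exact ⟨𝓑, h𝓑, le_of_lt hrlt⟩
      choose F hF1 hF2 using H
      have hsup : (𝓒.biUnion F).sup id = 𝓒.sup id := by
        rw [Finset.sup_biUnion]
        exact Finset.sup_congr rfl fun C _ => hF1 C
      have hcard : (𝓒.card : ℝ) * ε' ≤ ε := by
        rw [hε']
        have h2 : (0:ℝ) < (𝓒.card : ℝ) + 1 := by positivity
        calc (𝓒.card : ℝ) * (ε / ((𝓒.card : ℝ) + 1))
            = ε * ((𝓒.card : ℝ) / ((𝓒.card : ℝ) + 1)) := by ring
          _ ≤ ε * 1 := by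
              apply mul_le_mul_of_nonneg_left _ (le_of_lt hε)
              rw [div_le_one h2]; linarith
          _ = ε := mul_one ε
      calc δ (𝓒.sup id) = δ ((𝓒.biUnion F).sup id) := by rw [hsup]
        _ ≤ ∑ B ∈ 𝓒.biUnion F, f B := hfsum _
        _ ≤ ∑ C ∈ 𝓒, ∑ B ∈ F C, f B := sum_biUnion_le_aux f hfnn 𝓒 F
        _ ≤ ∑ C ∈ 𝓒, (g C + ε') := Finset.sum_le_sum fun C _ => hF2 C
        _ = (∑ C ∈ 𝓒, g C) + 𝓒.card * ε' := by
            rw [Finset.sum_add_distrib, Finset.sum_const, nsmul_eq_mul]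
        _ ≤ (∑ C ∈ 𝓒, g C) + ε := by linarith
  have hgf : g = f := hfmin g hgP hgle
  have hsub : ∀ 𝓑 : Finset (Finset X), f (𝓑.sup id) ≤ ∑ B ∈ 𝓑, f B := by
    intro 𝓑
    have : g (𝓑.sup id) ≤ ∑ B ∈ 𝓑, f B := csInf_le (hTbdd _) ⟨𝓑, rfl, rfl⟩
    rwa [hgf] at this
  -- bddAbove of the sup-sets
  have hbdd : ∀ A : Finset X,
      BddAbove ({r : ℝ | ∃ B : Finset X, r = δ (A ∪ B) - f B}) := by
    intro A
    refine ⟨f A, ?_⟩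
    rintro r ⟨B, rfl⟩
    have := hpair A B
    linarith
  have hne : ∀ A : Finset X,
      ({r : ℝ | ∃ B : Finset X, r = δ (A ∪ B) - f B}).Nonempty :=
    fun A => ⟨δ (A ∪ ∅) - f ∅, ∅, rfl⟩
  -- Part (2)
  have part2 : ∀ A : Finset X, f A = sSup {r : ℝ | ∃ B : Finset X, r = δ (A ∪ B) - f B} := by
    intro A
    by_cases hA : A = ∅
    · subst hA
      have hle : sSup {r : ℝ | ∃ B : Finset X, r = δ (∅ ∪ B) - f B} ≤ 0 := by
        apply csSup_le (hne ∅)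
        rintro r ⟨B, rfl⟩
        have h1 : δ (∅ ∪ B) = δ B := by rw [Finset.empty_union]
        rw [h1]
        linarith [hfδ B]
      have hge : (0:ℝ) ≤ sSup {r : ℝ | ∃ B : Finset X, r = δ (∅ ∪ B) - f B} := by
        apply le_csSup (hbdd ∅)
        exact ⟨∅, by simp [hδe, hf0]⟩
      rw [hf0]; linarith
    · set s := sSup {r : ℝ | ∃ B : Finset X, r = δ (A ∪ B) - f B} with hs
      have hkey : ∀ B : Finset X, δ (A ∪ B) ≤ s + f B := by
        intro B
        have : δ (A ∪ B) - f B ≤ s := le_csSup (hbdd A) ⟨B, rfl⟩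
        linarith
      have hsleA : s ≤ f A := by
        apply csSup_le (hne A)
        rintro r ⟨B, rfl⟩
        have := hpair A B
        linarith
      set g2 : Finset X → ℝ := fun C => if C = A then s else f C with hg2
      have hg2le : ∀ C, g2 C ≤ f C := by
        intro C
        rw [hg2]
        dsimp only
        split
        · next h => subst h; exact hsleA
        · exact le_refl _
      have hg2P : MemP δ g2 := by
        constructor
        · rw [hg2]
          dsimp only
          rw [if_neg (fun h => hA h.symm)]
          exact hf0
        · intro 𝓐
          by_cases hmem : A ∈ 𝓐
          · have hsum : ∑ C ∈ 𝓐, g2 C = s + ∑ C ∈ 𝓐.erase A, f C := by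
              rw [← Finset.add_sum_erase 𝓐 g2 hmem]
              congr 1
              · rw [hg2]; simp
              · apply Finset.sum_congr rfl
                intro C hC
                rw [hg2]
                dsimp only
                rw [if_neg (Finset.ne_of_mem_erase hC)]
            have hsup2 : 𝓐.sup id = A ∪ (𝓐.erase A).sup id := by
              conv_lhs => rw [← Finset.insert_erase hmem]
              rw [Finset.sup_insert]
              rfl
            rw [hsum, hsup2]
            have h1 := hkey ((𝓐.erase A).sup id)
            have h2 := hsub (𝓐.erase A)
            linarith
          · have heq : ∑ C ∈ 𝓐, g2 C = ∑ C ∈ 𝓐, f C := by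
              apply Finset.sum_congr rfl
              intro C hC
              rw [hg2]
              dsimp only
              rw [if_neg (by rintro rfl; exact hmem hC)]
            rw [heq]
            exact hfsum 𝓐
      have hg2f : g2 = f := hfmin g2 hg2P hg2le
      have : g2 A = s := by rw [hg2]; simp
      rw [← hg2f, this]
  refine ⟨?_, part2⟩
  intro A B C hB
  rw [part2 (A ∪ C)]
  apply csSup_le (hne (A ∪ C))
  rintro r ⟨D, rfl⟩
  have h1 : δ (A ∪ (C ∪ D)) ≤ δ (A ∪ B) + δ (B ∪ (C ∪ D)) := hδtri A B (C ∪ D) hB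
  have h2 : δ ((B ∪ C) ∪ D) - f D ≤ f (B ∪ C) := by
    rw [part2 (B ∪ C)]
    exact le_csSup (hbdd (B ∪ C)) ⟨D, rfl⟩
  have h3 : (A ∪ C) ∪ D = A ∪ (C ∪ D) := Finset.union_assoc A C D
  have h4 : (B ∪ C) ∪ D = B ∪ (C ∪ D) := Finset.union_assoc B C D
  rw [h3]
  rw [h4] at h2
  linarith

end
end

section
/- Let (X, δ) be a diversity. Then (T_X, δ_T) is a diversity; that is, δ_T(F) ≥ 0 for all finite F ⊆ T_X with δ_T(F) = 0 if and only if |F| ≤ 1, and δ_T(F ∪ H) ≤ δ_T(F ∪ G) + δ_T(G ∪ H) for all finite F, G, H ⊆ T_X with G ≠ ∅. -/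
open scoped Classical

noncomputable section

/-- The function `δ_T` on finite subsets of the tight span: `δ_T ∅ = 0` and for nonempty `F`,
`δ_T F = sup { δ(⋃𝓐) - Σ_{A ∈ 𝓐} inf_{f ∈ F} f A : 𝓐 a finite collection of finite subsets }`. -/
noncomputable def deltaT {X : Type*} (δ : Finset X → ℝ) (F : Finset (Finset X → ℝ)) : ℝ :=
  if F = ∅ then 0
  else sSup {r : ℝ | ∃ 𝓐 : Finset (Finset X),
    r = δ (𝓐.sup id) - ∑ A ∈ 𝓐, sInf ((fun f => f A) '' (F : Set (Finset X → ℝ)))}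

namespace TightSpanAux

variable {X : Type*} {δ : Finset X → ℝ}

/-- `inf_{f ∈ F} f A` as a real number. -/
noncomputable def minf (F : Finset (Finset X → ℝ)) (A : Finset X) : ℝ :=
  sInf ((fun f => f A) '' (F : Set (Finset X → ℝ)))

/-- The set whose supremum defines `deltaT` for nonempty `F`. -/
def Sset (δ : Finset X → ℝ) (F : Finset (Finset X → ℝ)) : Set ℝ :=
  {r : ℝ | ∃ 𝓐 : Finset (Finset X), r = δ (𝓐.sup id) - ∑ A ∈ 𝓐, minf F A}

lemma deltaT_eq {F : Finset (Finset X → ℝ)} (h : F ≠ ∅) :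
    deltaT δ F = sSup (Sset δ F) := by
  rw [deltaT, if_neg h]; rfl

lemma delta_empty (hδ : IsDiversity δ) : δ (∅ : Finset X) = 0 :=
  (hδ.2.1 ∅).2 (by simp)

lemma delta_singleton (hδ : IsDiversity δ) (x : X) : δ {x} = 0 :=
  (hδ.2.1 {x}).2 (by simp)

lemma delta_insert (hδ : IsDiversity δ) (A : Finset X) (x : X) :
    δ A ≤ δ (insert x A) := by
  have h := hδ.2.2 A {x} ∅ (by simp)
  rw [Finset.union_empty, Finset.union_empty, delta_singleton hδ] at h
  have : A ∪ {x} = insert x A := by ext y; simp [or_comm]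
  rw [this] at h
  linarith

lemma delta_le_union_right (hδ : IsDiversity δ) (A B : Finset X) : δ A ≤ δ (A ∪ B) := by
  induction B using Finset.induction_on with
  | empty => simp
  | @insert x s hx ih =>
    rw [Finset.union_insert]
    exact ih.trans (delta_insert hδ _ x)

lemma delta_mono (hδ : IsDiversity δ) {A B : Finset X} (h : A ⊆ B) : δ A ≤ δ B := by
  have := delta_le_union_right hδ A B
  rwa [Finset.union_eq_right.2 h] at this

lemma memP_delta_le {f : Finset X → ℝ} (hf : MemP δ f) (A : Finset X) : δ A ≤ f A := by
  have h := hf.2 {A}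
  simpa using h

lemma memP_nn (hδ : IsDiversity δ) {f : Finset X → ℝ} (hf : MemP δ f) (A : Finset X) :
    0 ≤ f A :=
  (hδ.1 A).trans (memP_delta_le hf A)

lemma memP_le_sum (hδ : IsDiversity δ) {f : Finset X → ℝ} (hf : MemP δ f)
    (A : Finset X) (𝓑 : Finset (Finset X)) :
    δ (A ∪ 𝓑.sup id) ≤ f A + ∑ B ∈ 𝓑, f B := by
  have h := hf.2 (insert A 𝓑)
  rw [Finset.sup_insert] at h
  have hsup : (id A ⊔ 𝓑.sup id : Finset X) = A ∪ 𝓑.sup id := rfl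
  rw [hsup] at h
  by_cases hA : A ∈ 𝓑
  · rw [Finset.insert_eq_self.mpr hA] at h
    have := memP_nn hδ hf A
    linarith
  · rw [Finset.sum_insert hA] at h
    exact h

lemma minf_le {F : Finset (Finset X → ℝ)} {f : Finset X → ℝ} (hf : f ∈ F) (A : Finset X) :
    minf F A ≤ f A :=
  csInf_le ((F.finite_toSet.image _).bddBelow) ⟨f, Finset.mem_coe.2 hf, rfl⟩

lemma minf_nonneg (hδ : IsDiversity δ) {F : Finset (Finset X → ℝ)} (hF : F.Nonempty)
    (hP : ∀ f ∈ F, MemP δ f) (A : Finset X) : 0 ≤ minf F A := by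
  apply le_csInf ((Finset.coe_nonempty.2 hF).image _)
  rintro b ⟨f, hf, rfl⟩
  exact memP_nn hδ (hP f (Finset.mem_coe.1 hf)) A

lemma minf_attained {F : Finset (Finset X → ℝ)} (hF : F.Nonempty) (A : Finset X) :
    ∃ f ∈ F, f A = minf F A := by
  have h := ((Finset.coe_nonempty.2 hF).image (fun f => f A)).csInf_mem
    (F.finite_toSet.image _)
  obtain ⟨f, hf, he⟩ := h
  exact ⟨f, Finset.mem_coe.1 hf, he⟩

lemma sum_union_le {ι : Type*} [DecidableEq ι] {s t : Finset ι} {f : ι → ℝ} (hf : ∀ i, 0 ≤ f i) :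
    ∑ i ∈ s ∪ t, f i ≤ ∑ i ∈ s, f i + ∑ i ∈ t, f i := by
  rw [← Finset.union_sdiff_self_eq_union, Finset.sum_union Finset.disjoint_sdiff]
  have : ∑ i ∈ t \ s, f i ≤ ∑ i ∈ t, f i :=
    Finset.sum_le_sum_of_subset_of_nonneg (Finset.sdiff_subset) (fun i _ _ => hf i)
  linarith

lemma delta_split (hδ : IsDiversity δ) {B : Finset X} (hB : B ≠ ∅) {ι : Type*}
    (s : Finset ι) (C : ι → Finset X) :
    δ (s.sup C ∪ B) ≤ (∑ i ∈ s, δ (C i ∪ B)) + δ B := by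
  induction s using Finset.induction_on with
  | empty => simp
  | @insert a s ha ih =>
    rw [Finset.sup_insert, Finset.sum_insert ha]
    have hsup : (C a ⊔ s.sup C : Finset X) ∪ B = C a ∪ (s.sup C ∪ B) := by
      show (C a ∪ s.sup C) ∪ B = _
      rw [Finset.union_assoc]
    rw [hsup]
    have h2 := hδ.2.2 (C a) B (s.sup C ∪ B) hB
    have h3 : B ∪ (s.sup C ∪ B) = s.sup C ∪ B := by ext y; simp; tauto
    rw [h3] at h2
    linarith

lemma zero_mem_Sset (hδ : IsDiversity δ) (F : Finset (Finset X → ℝ)) :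
    (0 : ℝ) ∈ Sset δ F :=
  ⟨∅, by simp [delta_empty hδ]⟩

lemma Sset_bddAbove (hδ : IsDiversity δ) {F : Finset (Finset X → ℝ)} (hF : F.Nonempty)
    (hP : ∀ f ∈ F, MemP δ f) : BddAbove (Sset δ F) := by
  by_cases hX : Nonempty X
  · obtain ⟨x⟩ := hX
    refine ⟨∑ f ∈ F, f {x}, ?_⟩
    rintro r ⟨𝓐, rfl⟩
    choose c hc1 hc2 using fun A => minf_attained (F := F) hF A
    set C : (Finset X → ℝ) → Finset X := fun f => (𝓐.filter fun A => c A = f).sup id with hC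
    have hmono : 𝓐.sup id ⊆ F.sup C := by
      intro y hy
      rw [Finset.mem_sup] at hy
      obtain ⟨A, hA, hyA⟩ := hy
      have h1 : A ≤ C (c A) := Finset.le_sup (f := id) (Finset.mem_filter.2 ⟨hA, rfl⟩)
      have h2 : C (c A) ≤ F.sup C := Finset.le_sup (hc1 A)
      exact h2 (h1 hyA)
    have h1 : δ (𝓐.sup id) ≤ δ (F.sup C ∪ {x}) :=
      delta_mono hδ (hmono.trans Finset.subset_union_left)
    have h2 : δ (F.sup C ∪ {x}) ≤ (∑ f ∈ F, δ (C f ∪ {x})) + δ {x} :=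
      delta_split hδ (by simp) F C
    have h3 : ∀ f ∈ F, δ (C f ∪ {x}) ≤ f {x} + ∑ A ∈ 𝓐.filter (fun A => c A = f), minf F A := by
      intro f hf
      have hle := memP_le_sum hδ (hP f hf) {x} (𝓐.filter fun A => c A = f)
      rw [Finset.union_comm] at hle
      refine hle.trans (le_of_eq ?_)
      congr 1
      refine Finset.sum_congr rfl (fun B hB => ?_)
      obtain ⟨hB1, hB2⟩ := Finset.mem_filter.1 hB
      rw [← hB2, hc2 B]
    have h4 : ∑ f ∈ F, ∑ A ∈ 𝓐.filter (fun A => c A = f), minf F A = ∑ A ∈ 𝓐, minf F A :=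
      Finset.sum_fiberwise_of_maps_to (fun A _ => hc1 A) _
    have h5 : δ ({x} : Finset X) = 0 := delta_singleton hδ x
    have h6 : ∑ f ∈ F, δ (C f ∪ {x}) ≤
        ∑ f ∈ F, (f {x} + ∑ A ∈ 𝓐.filter (fun A => c A = f), minf F A) :=
      Finset.sum_le_sum h3
    rw [Finset.sum_add_distrib, h4] at h6
    linarith
  · refine ⟨0, ?_⟩
    rintro r ⟨𝓐, rfl⟩
    have hsup : 𝓐.sup id = ∅ := Finset.eq_empty_of_forall_notMem fun x _ => hX ⟨x⟩
    have hnn : 0 ≤ ∑ A ∈ 𝓐, minf F A :=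
      Finset.sum_nonneg fun A _ => minf_nonneg hδ hF hP A
    rw [hsup, delta_empty hδ]
    linarith

lemma deltaT_nonneg (hδ : IsDiversity δ) {F : Finset (Finset X → ℝ)}
    (hP : ∀ f ∈ F, MemP δ f) : 0 ≤ deltaT δ F := by
  rcases eq_or_ne F ∅ with rfl | h
  · rw [deltaT]; simp
  · rw [deltaT_eq h]
    exact le_csSup (Sset_bddAbove hδ (Finset.nonempty_iff_ne_empty.2 h) hP) (zero_mem_Sset hδ F)

/-- Key characterization: a minimal element of `P_X` satisfies
`g A = sup { δ(A ∪ ⋃𝓑) - Σ_{B∈𝓑} g B }`. -/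
lemma memT_sup (hδ : IsDiversity δ) {g : Finset X → ℝ} (hg : MemT δ g) (A : Finset X) :
    g A = sSup {r : ℝ | ∃ 𝓑 : Finset (Finset X), r = δ (A ∪ 𝓑.sup id) - ∑ B ∈ 𝓑, g B} := by
  set T := {r : ℝ | ∃ 𝓑 : Finset (Finset X), r = δ (A ∪ 𝓑.sup id) - ∑ B ∈ 𝓑, g B} with hT
  have hub : ∀ r ∈ T, r ≤ g A := by
    rintro r ⟨𝓑, rfl⟩
    have := memP_le_sum hδ hg.1 A 𝓑
    linarith
  have hbdd : BddAbove T := ⟨g A, hub⟩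
  have hmemA : δ A ∈ T := ⟨∅, by simp⟩
  have hne : T.Nonempty := ⟨δ A, hmemA⟩
  refine le_antisymm ?_ (csSup_le hne hub)
  by_contra hcon
  push_neg at hcon
  have hA0 : (0 : ℝ) ≤ sSup T := (hδ.1 A).trans (le_csSup hbdd hmemA)
  have hAne : A ≠ ∅ := by
    rintro rfl
    rw [hg.1.1] at hcon
    linarith
  set g' := Function.update g A (sSup T) with hg'
  have hg'P : MemP δ g' := by
    constructor
    · rw [hg', Function.update_of_ne (Ne.symm hAne)]
      exact hg.1.1
    · intro 𝓒
      by_cases hA : A ∈ 𝓒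
      · have hsum : ∑ B ∈ 𝓒, g' B = sSup T + ∑ B ∈ 𝓒.erase A, g B := by
          conv_lhs => rw [← Finset.insert_erase hA]
          rw [Finset.sum_insert (Finset.notMem_erase _ _)]
          congr 1
          · rw [hg', Function.update_self]
          · exact Finset.sum_congr rfl fun B hB => by
              rw [hg', Function.update_of_ne (Finset.ne_of_mem_erase hB)]
        have hel : δ (A ∪ (𝓒.erase A).sup id) - ∑ B ∈ 𝓒.erase A, g B ≤ sSup T :=
          le_csSup hbdd ⟨𝓒.erase A, rfl⟩
        have hsup2 : 𝓒.sup id = A ∪ (𝓒.erase A).sup id := by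
          conv_lhs => rw [← Finset.insert_erase hA]
          rw [Finset.sup_insert]
          rfl
        rw [hsum, hsup2]
        linarith
      · have heq : ∑ B ∈ 𝓒, g' B = ∑ B ∈ 𝓒, g B :=
          Finset.sum_congr rfl fun B hB => by
            rw [hg', Function.update_of_ne (by rintro rfl; exact hA hB)]
        rw [heq]
        exact hg.1.2 𝓒
  have hle : ∀ B, g' B ≤ g B := by
    intro B
    rcases eq_or_ne B A with rfl | h
    · rw [hg', Function.update_self]
      exact le_of_lt hcon
    · rw [hg', Function.update_of_ne h]
  have heq := hg.2 g' hg'P hle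
  have hval : g' A = g A := by rw [heq]
  rw [hg', Function.update_self] at hval
  exact absurd hval (ne_of_lt hcon)

/-- Key step for the triangle inequality. -/
lemma key (hδ : IsDiversity δ) {E : Finset (Finset X → ℝ)} {g : Finset X → ℝ}
    (hg : g ∈ E) (hgT : MemT δ g) (hP : ∀ f ∈ E, MemP δ f) (𝓐₁ : Finset (Finset X)) :
    g (𝓐₁.sup id) ≤ (∑ A ∈ 𝓐₁, minf E A) + deltaT δ E := by
  have hEne : E.Nonempty := ⟨g, hg⟩
  have hbdd := Sset_bddAbove hδ hEne hP
  rw [memT_sup hδ hgT]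
  refine csSup_le ⟨δ (𝓐₁.sup id), ⟨∅, by simp⟩⟩ ?_
  rintro r ⟨𝓑, rfl⟩
  have h1 : δ ((𝓐₁ ∪ 𝓑).sup id) - ∑ A ∈ 𝓐₁ ∪ 𝓑, minf E A ≤ deltaT δ E := by
    rw [deltaT_eq (Finset.nonempty_iff_ne_empty.1 hEne)]
    exact le_csSup hbdd ⟨𝓐₁ ∪ 𝓑, rfl⟩
  have h2 : (𝓐₁ ∪ 𝓑).sup id = 𝓐₁.sup id ∪ 𝓑.sup id := Finset.sup_union
  have h3 : ∑ A ∈ 𝓐₁ ∪ 𝓑, minf E A ≤ ∑ A ∈ 𝓐₁, minf E A + ∑ B ∈ 𝓑, minf E B :=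
    sum_union_le (fun A => minf_nonneg hδ hEne hP A)
  have h4 : ∑ B ∈ 𝓑, minf E B ≤ ∑ B ∈ 𝓑, g B :=
    Finset.sum_le_sum fun B _ => minf_le hg B
  rw [h2] at h1
  linarith

lemma deltaT_pos (hδ : IsDiversity δ) {F : Finset (Finset X → ℝ)}
    (hT : ∀ f ∈ F, MemT δ f) (h2 : 1 < F.card) : 0 < deltaT δ F := by
  obtain ⟨f, hf, g, hg, hfg⟩ := Finset.one_lt_card.1 h2
  set h : Finset X → ℝ := fun A => min (f A) (g A) with hh
  have hne : ¬ MemP δ h := by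
    intro hP
    have e1 : h = f := (hT f hf).2 h hP (fun A => min_le_left _ _)
    have e2 : h = g := (hT g hg).2 h hP (fun A => min_le_right _ _)
    exact hfg (e1.symm.trans e2)
  have hh0 : h ∅ = 0 := by
    rw [hh]
    simp [(hT f hf).1.1, (hT g hg).1.1]
  have hex : ∃ 𝓐 : Finset (Finset X), ∑ A ∈ 𝓐, h A < δ (𝓐.sup id) := by
    by_contra hc
    push_neg at hc
    exact hne ⟨hh0, fun 𝓐 => hc 𝓐⟩
  obtain ⟨𝓐, h𝓐⟩ := hex
  have hFne : F.Nonempty := ⟨f, hf⟩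
  have hPall : ∀ f' ∈ F, MemP δ f' := fun f' hf' => (hT f' hf').1
  have hmle : ∀ A ∈ 𝓐, minf F A ≤ h A := fun A _ =>
    le_min (minf_le hf A) (minf_le hg A)
  have hsle := Finset.sum_le_sum hmle
  have hpos : 0 < δ (𝓐.sup id) - ∑ A ∈ 𝓐, minf F A := by linarith
  have hmem : δ (𝓐.sup id) - ∑ A ∈ 𝓐, minf F A ≤ deltaT δ F := by
    rw [deltaT_eq (Finset.nonempty_iff_ne_empty.1 hFne)]
    exact le_csSup (Sset_bddAbove hδ hFne hPall) ⟨𝓐, rfl⟩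
  linarith

lemma deltaT_singleton (hδ : IsDiversity δ) {f : Finset X → ℝ} (hf : MemP δ f) :
    deltaT δ ({f} : Finset (Finset X → ℝ)) = 0 := by
  have hne : ({f} : Finset (Finset X → ℝ)) ≠ ∅ := by simp
  have hP : ∀ f' ∈ ({f} : Finset (Finset X → ℝ)), MemP δ f' := by
    intro f' hf'
    rw [Finset.mem_singleton] at hf'
    exact hf' ▸ hf
  rw [deltaT_eq hne]
  apply le_antisymm
  · apply csSup_le ⟨0, zero_mem_Sset hδ _⟩
    rintro r ⟨𝓐, rfl⟩
    have hm : ∀ A ∈ 𝓐, minf {f} A = f A := by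
      intro A _
      rw [minf]
      simp
    rw [Finset.sum_congr rfl hm]
    have := hf.2 𝓐
    linarith
  · exact le_csSup (Sset_bddAbove hδ (by simp) hP) (zero_mem_Sset hδ _)

lemma deltaT_triangle (hδ : IsDiversity δ) {F G H : Finset (Finset X → ℝ)}
    (hT : ∀ f ∈ F ∪ G ∪ H, MemT δ f) (hG : G ≠ ∅) :
    deltaT δ (F ∪ H) ≤ deltaT δ (F ∪ G) + deltaT δ (G ∪ H) := by
  obtain ⟨g, hg⟩ := Finset.nonempty_iff_ne_empty.2 hG
  have hPFG : ∀ f ∈ F ∪ G, MemP δ f := fun f hf =>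
    (hT f (by simp only [Finset.mem_union] at hf ⊢; tauto)).1
  have hPGH : ∀ f ∈ G ∪ H, MemP δ f := fun f hf =>
    (hT f (by simp only [Finset.mem_union] at hf ⊢; tauto)).1
  have hgT : MemT δ g := hT g (Finset.mem_union_left H (Finset.mem_union_right F hg))
  have hdFG0 : 0 ≤ deltaT δ (F ∪ G) := deltaT_nonneg hδ hPFG
  have hdGH0 : 0 ≤ deltaT δ (G ∪ H) := deltaT_nonneg hδ hPGH
  rcases eq_or_ne (F ∪ H) ∅ with hFH | hFH
  · rw [hFH, deltaT, if_pos rfl]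
    linarith
  have hFHne := Finset.nonempty_iff_ne_empty.2 hFH
  have hPFH : ∀ f ∈ F ∪ H, MemP δ f := fun f hf =>
    (hT f (by simp only [Finset.mem_union] at hf ⊢; tauto)).1
  rw [deltaT_eq hFH]
  apply csSup_le ⟨0, zero_mem_Sset hδ _⟩
  rintro r ⟨𝓐, rfl⟩
  set 𝓐₁ := 𝓐.filter (fun A => ∃ f ∈ F, f A = minf (F ∪ H) A) with h𝓐₁
  set 𝓐₃ := 𝓐 \ 𝓐₁ with h𝓐₃
  have hsplit : 𝓐₁ ∪ 𝓐₃ = 𝓐 := Finset.union_sdiff_of_subset (Finset.filter_subset _ _)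
  have hdisj : Disjoint 𝓐₁ 𝓐₃ := Finset.disjoint_sdiff
  have hsum𝓐 : ∑ A ∈ 𝓐, minf (F ∪ H) A
      = ∑ A ∈ 𝓐₁, minf (F ∪ H) A + ∑ A ∈ 𝓐₃, minf (F ∪ H) A := by
    rw [← hsplit, Finset.sum_union hdisj]
  have hm1 : ∀ A ∈ 𝓐₁, minf (F ∪ G) A ≤ minf (F ∪ H) A := by
    intro A hA
    obtain ⟨-, f, hfF, hfe⟩ := Finset.mem_filter.1 hA
    rw [← hfe]
    exact minf_le (Finset.mem_union_left _ hfF) A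
  have hm3 : ∀ A ∈ 𝓐₃, minf (G ∪ H) A ≤ minf (F ∪ H) A := by
    intro A hA
    obtain ⟨hA𝓐, hnot⟩ := Finset.mem_sdiff.1 hA
    obtain ⟨f, hfFH, hfe⟩ := minf_attained hFHne A
    have hfH : f ∈ H := by
      rcases Finset.mem_union.1 hfFH with hF' | hH'
      · exact absurd (Finset.mem_filter.2 ⟨hA𝓐, f, hF', hfe⟩) hnot
      · exact hH'
    rw [← hfe]
    exact minf_le (Finset.mem_union_right _ hfH) A
  have hkey1 := key hδ (Finset.mem_union_right F hg) hgT hPFG 𝓐₁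
  have hkey3 := key hδ (Finset.mem_union_left H hg) hgT hPGH 𝓐₃
  have hP2 : δ (𝓐₁.sup id ∪ 𝓐₃.sup id) ≤ g (𝓐₁.sup id) + g (𝓐₃.sup id) := by
    by_cases he : 𝓐₁.sup id = 𝓐₃.sup id
    · rw [he, Finset.union_self]
      have h1 := memP_delta_le hgT.1 (𝓐₃.sup id)
      have h0 := memP_nn hδ hgT.1 (𝓐₁.sup id)
      rw [he] at h0
      linarith
    · have h := hgT.1.2 {𝓐₁.sup id, 𝓐₃.sup id}
      rw [Finset.sum_pair he] at h
      have hs : ({𝓐₁.sup id, 𝓐₃.sup id} : Finset (Finset X)).sup id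
          = 𝓐₁.sup id ∪ 𝓐₃.sup id := by
        rw [Finset.sup_insert, Finset.sup_singleton]
        rfl
      rwa [hs] at h
  have hsup : 𝓐.sup id = 𝓐₁.sup id ∪ 𝓐₃.sup id := by
    conv_lhs => rw [← hsplit]
    exact Finset.sup_union
  have hs1 : ∑ A ∈ 𝓐₁, minf (F ∪ G) A ≤ ∑ A ∈ 𝓐₁, minf (F ∪ H) A := Finset.sum_le_sum hm1
  have hs3 : ∑ A ∈ 𝓐₃, minf (G ∪ H) A ≤ ∑ A ∈ 𝓐₃, minf (F ∪ H) A := Finset.sum_le_sum hm3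
  rw [hsup, hsum𝓐]
  linarith

end TightSpanAux

open TightSpanAux in
/-- `(T_X, δ_T)` is a diversity: `δ_T` is nonnegative on finite subsets of `T_X`,
vanishes exactly on subsets with at most one element, and satisfies the triangle
inequality (D2). -/
theorem tightSpan_is_diversity {X : Type*} (δ : Finset X → ℝ) (hδ : IsDiversity δ) :
    (∀ F : Finset (Finset X → ℝ), (∀ f ∈ F, MemT δ f) → 0 ≤ deltaT δ F) ∧
    (∀ F : Finset (Finset X → ℝ), (∀ f ∈ F, MemT δ f) → (deltaT δ F = 0 ↔ F.card ≤ 1)) ∧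
    (∀ F G H : Finset (Finset X → ℝ), (∀ f ∈ F ∪ G ∪ H, MemT δ f) → G ≠ ∅ →
      deltaT δ (F ∪ H) ≤ deltaT δ (F ∪ G) + deltaT δ (G ∪ H)) := by
  refine ⟨?_, ?_, ?_⟩
  · intro F hF
    exact deltaT_nonneg hδ (fun f hf => (hF f hf).1)
  · intro F hF
    constructor
    · intro h0
      by_contra hc
      push_neg at hc
      have := deltaT_pos hδ hF hc
      linarith
    · intro hcard
      rcases F.eq_empty_or_nonempty with rfl | ⟨f, hf⟩
      · rw [deltaT, if_pos rfl]
      · have hFs : F = {f} :=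
          Finset.eq_singleton_iff_unique_mem.2
            ⟨hf, fun b hb => Finset.card_le_one.1 hcard b hb f hf⟩
      -- fill below
        rw [hFs]
        exact deltaT_singleton hδ (hF f hf).1
  · intro F G H hT hG
    exact deltaT_triangle hδ hT hG

end
end

section
/- A diversity (X, δ) is injective if and only if it is hyperconvex. -/
open scoped Classical

noncomputable section

universe u

/-- A non-expansive map between diversities. -/
def IsNonexpansive {Y Z : Type*} (δY : Finset Y → ℝ) (δZ : Finset Z → ℝ) (φ : Y → Z) : Prop :=
  ∀ A : Finset Y, δZ (A.image φ) ≤ δY A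

/-- An embedding of diversities: injective and preserving the diversity of finite sets. -/
def IsDivEmbedding {Y Z : Type*} (δY : Finset Y → ℝ) (δZ : Finset Z → ℝ) (φ : Y → Z) : Prop :=
  Function.Injective φ ∧ ∀ A : Finset Y, δZ (A.image φ) = δY A

/-- An injective diversity: every non-expansive map into it extends along any embedding. -/
def InjectiveDiversity {X : Type u} (δ : Finset X → ℝ) : Prop :=
  ∀ (Y₁ Y₂ : Type u) (δ₁ : Finset Y₁ → ℝ) (δ₂ : Finset Y₂ → ℝ),
    IsDiversity δ₁ → IsDiversity δ₂ →
    ∀ (π : Y₁ → Y₂) (φ : Y₁ → X), IsDivEmbedding δ₁ δ₂ π → IsNonexpansive δ₁ δ φ →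
      ∃ ψ : Y₂ → X, IsNonexpansive δ₂ δ ψ ∧ φ = ψ ∘ π

/-- A hyperconvex diversity. -/
def DivHyperconvex {X : Type*} (δ : Finset X → ℝ) : Prop :=
  ∀ r : Finset X → ℝ,
    (∀ 𝓐 : Finset (Finset X), δ (𝓐.sup id) ≤ ∑ A ∈ 𝓐, r A) →
    ∃ z : X, ∀ Y : Finset X, δ ({z} ∪ Y) ≤ r Y

section helpers
variable {X : Type*} {δ : Finset X → ℝ} (hδ : IsDiversity δ)
include hδ

lemma div_nonneg' (A : Finset X) : 0 ≤ δ A := hδ.1 A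

lemma div_card_le_one {A : Finset X} (h : A.card ≤ 1) : δ A = 0 := (hδ.2.1 A).2 h

lemma div_empty : δ ∅ = 0 := div_card_le_one hδ (by simp)

lemma div_singleton (x : X) : δ {x} = 0 := div_card_le_one hδ (by simp)

lemma div_tri (A B C : Finset X) (hB : B ≠ ∅) : δ (A ∪ C) ≤ δ (A ∪ B) + δ (B ∪ C) :=
  hδ.2.2 A B C hB

lemma div_insert_mono (x : X) (A : Finset X) : δ A ≤ δ (insert x A) := by
  have h := div_tri hδ A {x} ∅ (by simp)
  simp only [Finset.union_empty] at h
  rw [div_singleton hδ] at h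
  have e : A ∪ {x} = insert x A := by
    ext y; simp [Finset.mem_insert, or_comm]
  rw [e] at h
  linarith

lemma div_mono {A B : Finset X} (h : A ⊆ B) : δ A ≤ δ B := by
  classical
  have key : ∀ u : Finset X, δ A ≤ δ (A ∪ u) := by
    intro u
    induction u using Finset.induction_on with
    | empty => simp
    | @insert a u ha ih =>
      have e : A ∪ insert a u = insert a (A ∪ u) := by
        ext y; simp [Finset.mem_insert]
      rw [e]
      exact le_trans ih (div_insert_mono hδ a (A ∪ u))
  have e : B = A ∪ (B \ A) := by
    rw [Finset.union_sdiff_self_eq_union, Finset.union_eq_right.2 h]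
  rw [e]
  exact key _

lemma div_star {A B : Finset X} {x : X} (hA : x ∈ A) (hB : x ∈ B) :
    δ (A ∪ B) ≤ δ A + δ B := by
  have h := div_tri hδ A {x} B (by simp)
  have h1 : A ∪ {x} = A := Finset.union_eq_left.2 (by simpa)
  have h2 : ({x} : Finset X) ∪ B = B := Finset.union_eq_right.2 (by simpa)
  rwa [h1, h2] at h

lemma div_insert_union (x : X) (A B : Finset X) :
    δ (insert x (A ∪ B)) ≤ δ (insert x A) + δ (insert x B) := by
  have e : insert x (A ∪ B) = insert x A ∪ insert x B := by
    ext y; simp [Finset.mem_insert, Finset.mem_union]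
  rw [e]
  exact div_star hδ (Finset.mem_insert_self _ _) (Finset.mem_insert_self _ _)

lemma div_sup_insert {ι : Type*} (s : Finset ι) (f : ι → Finset X) (x : X) :
    δ (insert x (s.sup f)) ≤ ∑ i ∈ s, δ (insert x (f i)) := by
  classical
  induction s using Finset.induction_on with
  | empty => simp [div_singleton hδ, le_refl]
  | @insert a s ha ih =>
    rw [Finset.sup_insert, Finset.sum_insert ha]
    have h1 : δ (insert x (f a ⊔ s.sup f)) ≤ δ (insert x (f a)) + δ (insert x (s.sup f)) :=
      div_insert_union hδ x _ _
    linarith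

end helpers

section dir2
variable {X : Type*}

/-- Union of a list of finsets. -/
def listUnion : List (Finset X) → Finset X
  | [] => ∅
  | D :: T => D ∪ listUnion T

@[simp] lemma listUnion_nil : listUnion ([] : List (Finset X)) = ∅ := rfl
@[simp] lemma listUnion_cons (D : Finset X) (T : List (Finset X)) :
    listUnion (D :: T) = D ∪ listUnion T := rfl

lemma listUnion_append (L₁ L₂ : List (Finset X)) :
    listUnion (L₁ ++ L₂) = listUnion L₁ ∪ listUnion L₂ := by
  induction L₁ with
  | nil => simp
  | cons D T ih => simp [ih, Finset.union_assoc]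

/-- Chain condition: each set in the list is attached to `U` or to later sets. -/
def lchain (U : Finset X) : List (Finset X) → Prop
  | [] => True
  | D :: T => (D ∩ (U ∪ listUnion T)).Nonempty ∧ lchain U T

lemma lchain_mono {U U' : Finset X} (h : U ⊆ U') :
    ∀ {L : List (Finset X)}, lchain U L → lchain U' L
  | [], _ => trivial
  | D :: T, ⟨hD, hT⟩ => by
    refine ⟨?_, lchain_mono h hT⟩
    obtain ⟨w, hw⟩ := hD
    simp only [Finset.mem_inter, Finset.mem_union] at hw
    exact ⟨w, by simp only [Finset.mem_inter, Finset.mem_union]; tauto⟩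

lemma lchain_append {U : Finset X} {L₁ L₂ : List (Finset X)}
    (h₁ : lchain U L₁) (h₂ : lchain U L₂) : lchain U (L₁ ++ L₂) := by
  induction L₁ with
  | nil => simpa
  | cons D T ih =>
    obtain ⟨hD, hT⟩ := h₁
    obtain ⟨w, hw⟩ := hD
    refine ⟨⟨w, ?_⟩, ih hT⟩
    simp only [List.append_eq, Finset.mem_inter, Finset.mem_union, listUnion_append] at hw ⊢
    tauto
end dir2

section dir2b
variable {X : Type*} {δ : Finset X → ℝ}

lemma div_peel (hδ : IsDiversity δ) :
    ∀ {L : List (Finset X)} {U : Finset X}, lchain U L →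
      δ (U ∪ listUnion L) ≤ δ U + (L.map δ).sum
  | [], U, _ => by simp
  | D :: T, U, ⟨hD, hT⟩ => by
    obtain ⟨w, hw⟩ := hD
    simp only [Finset.mem_inter] at hw
    have e : U ∪ listUnion (D :: T) = (U ∪ listUnion T) ∪ D := by
      simp only [listUnion_cons]
      ext y; simp [Finset.mem_union]; tauto
    rw [e]
    have h1 : δ ((U ∪ listUnion T) ∪ D) ≤ δ (U ∪ listUnion T) + δ D :=
      div_star hδ hw.2 hw.1
    have h2 := div_peel hδ hT
    simp only [List.map_cons, List.sum_cons]
    linarith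

/-- Cost of a family. -/
def tcost (δ r : Finset X → ℝ) (𝓑 : Finset (Finset X)) (L : List (Finset X)) : ℝ :=
  (∑ B ∈ 𝓑, r B) + (L.map δ).sum

/-- Set of achievable costs of families covering `A`. -/
def tfamSet (δ r : Finset X → ℝ) (A : Finset X) : Set ℝ :=
  {c | ∃ 𝓑 L, (A ⊆ 𝓑.sup id ∪ listUnion L ∧ lchain (𝓑.sup id) L) ∧ c = tcost δ r 𝓑 L}

/-- The one-point-extension value. -/
def rt (δ r : Finset X → ℝ) (A : Finset X) : ℝ := sInf (tfamSet δ r A)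

lemma sum_union_le_real {s t : Finset (Finset X)} {f : Finset X → ℝ}
    (hf : ∀ B, 0 ≤ f B) : ∑ B ∈ s ∪ t, f B ≤ ∑ B ∈ s, f B + ∑ B ∈ t, f B := by
  classical
  have h := Finset.sum_union_inter (s₁ := s) (s₂ := t) (f := f)
  have h2 : 0 ≤ ∑ B ∈ s ∩ t, f B := Finset.sum_nonneg fun B _ => hf B
  linarith

lemma sum_insert_le_real {s : Finset (Finset X)} {a : Finset X} {f : Finset X → ℝ}
    (hf : ∀ B, 0 ≤ f B) : ∑ B ∈ insert a s, f B ≤ f a + ∑ B ∈ s, f B := by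
  classical
  have : insert a s = {a} ∪ s := by rw [Finset.insert_eq]
  rw [this]
  have := sum_union_le_real (s := {a}) (t := s) hf
  simpa using this

variable {r : Finset X → ℝ}

lemma r_nonneg (hδ : IsDiversity δ)
    (hr : ∀ 𝓐 : Finset (Finset X), δ (𝓐.sup id) ≤ ∑ A ∈ 𝓐, r A) (B : Finset X) :
    0 ≤ r B := by
  have h := hr {B}
  simp only [Finset.sup_singleton, id, Finset.sum_singleton] at h
  exact le_trans (div_nonneg' hδ B) h

lemma tfamSet_nonempty (δ r : Finset X → ℝ) (A : Finset X) : (tfamSet δ r A).Nonempty := by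
  refine ⟨tcost δ r {A} [], {A}, [], ⟨?_, trivial⟩, rfl⟩
  simp

lemma tfamSet_lb (hδ : IsDiversity δ)
    (hr : ∀ 𝓐 : Finset (Finset X), δ (𝓐.sup id) ≤ ∑ A ∈ 𝓐, r A)
    {A : Finset X} {c : ℝ} (hc : c ∈ tfamSet δ r A) : δ A ≤ c := by
  obtain ⟨𝓑, L, ⟨hcov, hch⟩, rfl⟩ := hc
  have h1 : δ A ≤ δ (𝓑.sup id ∪ listUnion L) := div_mono hδ hcov
  have h2 : δ (𝓑.sup id ∪ listUnion L) ≤ δ (𝓑.sup id) + (L.map δ).sum := div_peel hδ hch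
  have h3 := hr 𝓑
  unfold tcost
  linarith

lemma tfamSet_bdd (hδ : IsDiversity δ)
    (hr : ∀ 𝓐 : Finset (Finset X), δ (𝓐.sup id) ≤ ∑ A ∈ 𝓐, r A)
    (A : Finset X) : BddBelow (tfamSet δ r A) :=
  ⟨0, fun c hc => le_trans (div_nonneg' hδ A) (tfamSet_lb hδ hr hc)⟩

lemma div_le_rt (hδ : IsDiversity δ)
    (hr : ∀ 𝓐 : Finset (Finset X), δ (𝓐.sup id) ≤ ∑ A ∈ 𝓐, r A) (A : Finset X) :
    δ A ≤ rt δ r A :=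
  le_csInf (tfamSet_nonempty δ r A) fun _ hc => tfamSet_lb hδ hr hc

lemma rt_nonneg (hδ : IsDiversity δ)
    (hr : ∀ 𝓐 : Finset (Finset X), δ (𝓐.sup id) ≤ ∑ A ∈ 𝓐, r A) (A : Finset X) :
    0 ≤ rt δ r A :=
  le_trans (div_nonneg' hδ A) (div_le_rt hδ hr A)

lemma rt_le_r (hδ : IsDiversity δ)
    (hr : ∀ 𝓐 : Finset (Finset X), δ (𝓐.sup id) ≤ ∑ A ∈ 𝓐, r A) (A : Finset X) :
    rt δ r A ≤ r A := by
  have hmem : r A ∈ tfamSet δ r A := by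
    refine ⟨{A}, [], ⟨?_, trivial⟩, ?_⟩ <;> simp [tcost]
  exact csInf_le (tfamSet_bdd hδ hr A) hmem

lemma rt_mono (hδ : IsDiversity δ)
    (hr : ∀ 𝓐 : Finset (Finset X), δ (𝓐.sup id) ≤ ∑ A ∈ 𝓐, r A)
    {A A' : Finset X} (h : A' ⊆ A) : rt δ r A' ≤ rt δ r A := by
  refine csInf_le_csInf (tfamSet_bdd hδ hr A') (tfamSet_nonempty δ r A) ?_
  rintro c ⟨𝓑, L, ⟨hcov, hch⟩, rfl⟩
  exact ⟨𝓑, L, ⟨le_trans h hcov, hch⟩, rfl⟩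

lemma rt_empty (hδ : IsDiversity δ)
    (hr : ∀ 𝓐 : Finset (Finset X), δ (𝓐.sup id) ≤ ∑ A ∈ 𝓐, r A) :
    rt δ r ∅ = 0 := by
  have h1 : rt δ r ∅ ≤ 0 := by
    have hmem : (0 : ℝ) ∈ tfamSet δ r ∅ := by
      refine ⟨∅, [], ⟨by simp, trivial⟩, by simp [tcost]⟩
    exact csInf_le (tfamSet_bdd hδ hr ∅) hmem
  exact le_antisymm h1 (rt_nonneg hδ hr ∅)
end dir2b

section dir2c
variable {X : Type*} {δ r : Finset X → ℝ}

lemma rt_subadd (hδ : IsDiversity δ)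
    (hr : ∀ 𝓐 : Finset (Finset X), δ (𝓐.sup id) ≤ ∑ A ∈ 𝓐, r A)
    (A C : Finset X) : rt δ r (A ∪ C) ≤ rt δ r A + rt δ r C := by
  refine le_of_forall_pos_le_add fun ε hε => ?_
  obtain ⟨c₁, hc₁, hlt₁⟩ :=
    Real.lt_sInf_add_pos (tfamSet_nonempty δ r A) (half_pos hε)
  obtain ⟨c₂, hc₂, hlt₂⟩ :=
    Real.lt_sInf_add_pos (tfamSet_nonempty δ r C) (half_pos hε)
  obtain ⟨𝓑₁, L₁, ⟨hcov₁, hch₁⟩, rfl⟩ := hc₁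
  obtain ⟨𝓑₂, L₂, ⟨hcov₂, hch₂⟩, rfl⟩ := hc₂
  have hmem : tcost δ r (𝓑₁ ∪ 𝓑₂) (L₁ ++ L₂) ∈ tfamSet δ r (A ∪ C) := by
    refine ⟨𝓑₁ ∪ 𝓑₂, L₁ ++ L₂, ⟨?_, ?_⟩, rfl⟩
    · rw [Finset.sup_union, listUnion_append]
      intro y hy
      rcases Finset.mem_union.1 hy with h | h
      · have := hcov₁ h
        simp only [Finset.mem_union, Finset.sup_eq_union] at this ⊢
        tauto
      · have := hcov₂ h
        simp only [Finset.mem_union, Finset.sup_eq_union] at this ⊢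
        tauto
    · rw [Finset.sup_union]
      exact lchain_append (lchain_mono le_sup_left hch₁) (lchain_mono le_sup_right hch₂)
  have hc : tcost δ r (𝓑₁ ∪ 𝓑₂) (L₁ ++ L₂) ≤ tcost δ r 𝓑₁ L₁ + tcost δ r 𝓑₂ L₂ := by
    unfold tcost
    have h1 := sum_union_le_real (s := 𝓑₁) (t := 𝓑₂) (f := r) (r_nonneg hδ hr)
    have h2 : ((L₁ ++ L₂).map δ).sum = (L₁.map δ).sum + (L₂.map δ).sum := by
      simp
    linarith
  have := csInf_le (tfamSet_bdd hδ hr (A ∪ C)) hmem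
  unfold rt at *
  linarith

lemma div_le_rt_add (hδ : IsDiversity δ)
    (hr : ∀ 𝓐 : Finset (Finset X), δ (𝓐.sup id) ≤ ∑ A ∈ 𝓐, r A)
    (A C : Finset X) : δ (A ∪ C) ≤ rt δ r A + rt δ r C :=
  le_trans (div_le_rt hδ hr _) (rt_subadd hδ hr A C)

lemma rt_tri (hδ : IsDiversity δ)
    (hr : ∀ 𝓐 : Finset (Finset X), δ (𝓐.sup id) ≤ ∑ A ∈ 𝓐, r A)
    (A B C : Finset X) (hB : B.Nonempty) :
    rt δ r (A ∪ C) ≤ rt δ r (A ∪ B) + δ (B ∪ C) := by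
  refine le_of_forall_pos_le_add fun ε hε => ?_
  obtain ⟨c₁, hc₁, hlt₁⟩ := Real.lt_sInf_add_pos (tfamSet_nonempty δ r (A ∪ B)) hε
  obtain ⟨𝓑, L, ⟨hcov, hch⟩, rfl⟩ := hc₁
  obtain ⟨b, hb⟩ := hB
  have hbU : b ∈ 𝓑.sup id ∪ listUnion L := hcov (Finset.mem_union_right _ hb)
  have hmem : tcost δ r 𝓑 ((B ∪ C) :: L) ∈ tfamSet δ r (A ∪ C) := by
    refine ⟨𝓑, (B ∪ C) :: L, ⟨?_, ⟨⟨b, ?_⟩, hch⟩⟩, rfl⟩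
    · intro y hy
      simp only [listUnion_cons, Finset.mem_union] at hy ⊢
      rcases hy with h | h
      · have := hcov (Finset.mem_union_left _ h)
        simp only [Finset.mem_union] at this
        tauto
      · tauto
    · simp only [Finset.mem_inter, Finset.mem_union]
      simp only [Finset.mem_union] at hbU
      tauto
  have hcost : tcost δ r 𝓑 ((B ∪ C) :: L) = tcost δ r 𝓑 L + δ (B ∪ C) := by
    unfold tcost
    simp [List.map_cons, List.sum_cons]
    ring
  have := csInf_le (tfamSet_bdd hδ hr (A ∪ C)) hmem
  rw [hcost] at this
  unfold rt at *
  linarith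

lemma rt_single_zero (hδ : IsDiversity δ)
    (hr : ∀ 𝓐 : Finset (Finset X), δ (𝓐.sup id) ≤ ∑ A ∈ 𝓐, r A)
    {a : X} (hz : rt δ r {a} = 0) (Y : Finset X) : δ (insert a Y) ≤ r Y := by
  refine le_of_forall_pos_le_add fun ε hε => ?_
  obtain ⟨c, hc, hlt⟩ := Real.lt_sInf_add_pos (tfamSet_nonempty δ r {a}) hε
  obtain ⟨𝓑, L, ⟨hcov, hch⟩, rfl⟩ := hc
  have hlt' : tcost δ r 𝓑 L < ε := by
    unfold rt at hz; linarith
  clear hlt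
  have ha : a ∈ 𝓑.sup id ∪ listUnion L := hcov (by simp)
  have h1 : insert a Y ⊆ (Y ∪ 𝓑.sup id) ∪ listUnion L := by
    intro y hy
    simp only [Finset.mem_insert, Finset.mem_union] at hy ha ⊢
    rcases hy with rfl | h <;> tauto
  have h2 : δ (insert a Y) ≤ δ ((Y ∪ 𝓑.sup id) ∪ listUnion L) := div_mono hδ h1
  have h3 : δ ((Y ∪ 𝓑.sup id) ∪ listUnion L) ≤ δ (Y ∪ 𝓑.sup id) + (L.map δ).sum :=
    div_peel hδ (lchain_mono Finset.subset_union_right hch)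
  have h4 : δ (Y ∪ 𝓑.sup id) ≤ ∑ B ∈ insert Y 𝓑, r B := by
    have := hr (insert Y 𝓑)
    rwa [Finset.sup_insert, id, Finset.sup_eq_union] at this
  have h5 : ∑ B ∈ insert Y 𝓑, r B ≤ r Y + ∑ B ∈ 𝓑, r B :=
    sum_insert_le_real (r_nonneg hδ hr)
  unfold tcost at hlt'
  linarith
end dir2c

section dir2d
variable {X : Type*}

lemma eraseNone_union (A B : Finset (Option X)) :
    (A ∪ B).eraseNone = A.eraseNone ∪ B.eraseNone := by
  ext y; simp [Finset.mem_eraseNone, Finset.mem_union]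

lemma eraseNone_image_some (A : Finset X) : (A.image some).eraseNone = A := by
  ext y; simp [Finset.mem_eraseNone]

lemma none_not_mem_image_some (A : Finset X) : none ∉ A.image some := by simp

lemma eq_image_of_none_not_mem {A : Finset (Option X)} (h : none ∉ A) :
    A = A.eraseNone.image some := by
  ext y
  cases y with
  | none => simp [h]
  | some a => simp [Finset.mem_eraseNone]

lemma card_eraseNone_of_none_not_mem {A : Finset (Option X)} (h : none ∉ A) :
    A.card = A.eraseNone.card := by
  conv_lhs => rw [eq_image_of_none_not_mem h]
  exact Finset.card_image_of_injective _ (Option.some_injective X)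

lemma eq_insert_of_none_mem {A : Finset (Option X)} (h : none ∈ A) :
    A = insert none (A.eraseNone.image some) := by
  ext y
  cases y with
  | none => simp [h]
  | some a => simp [Finset.mem_eraseNone]

lemma card_eraseNone_of_none_mem {A : Finset (Option X)} (h : none ∈ A) :
    A.card = A.eraseNone.card + 1 := by
  conv_lhs => rw [eq_insert_of_none_mem h]
  rw [Finset.card_insert_of_notMem (none_not_mem_image_some _)]
  rw [Finset.card_image_of_injective _ (Option.some_injective X)]

/-- The one-point extension diversity on `Option X`. -/
def optionDiv (δ r : Finset X → ℝ) (A : Finset (Option X)) : ℝ :=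
  if none ∈ A then rt δ r A.eraseNone else δ A.eraseNone

variable {δ r : Finset X → ℝ}

lemma optionDiv_image_some (δ r : Finset X → ℝ) {inst : DecidableEq (Option X)} (A : Finset X) :
    optionDiv δ r (@Finset.image _ _ inst some A) = δ A := by
  have h1 : none ∉ @Finset.image _ _ inst some A := by simp
  rw [optionDiv, if_neg h1]
  congr 1
  ext y; simp [Finset.mem_eraseNone]

lemma optionDiv_isDiversity (hδ : IsDiversity δ)
    (hr : ∀ 𝓐 : Finset (Finset X), δ (𝓐.sup id) ≤ ∑ A ∈ 𝓐, r A)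
    (hpos : ∀ a : X, 0 < rt δ r {a}) : IsDiversity (optionDiv δ r) := by
  refine ⟨?_, ?_, ?_⟩
  · intro A
    unfold optionDiv
    split
    · exact rt_nonneg hδ hr _
    · exact div_nonneg' hδ _
  · intro A
    unfold optionDiv
    by_cases h : none ∈ A
    · rw [if_pos h, card_eraseNone_of_none_mem h]
      constructor
      · intro h0
        by_contra hc
        push_neg at hc
        have h2 : 1 ≤ A.eraseNone.card := by omega
        obtain ⟨a, ha⟩ := Finset.card_pos.1 (lt_of_lt_of_le zero_lt_one h2)
        have hm : rt δ r {a} ≤ rt δ r A.eraseNone :=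
          rt_mono hδ hr (Finset.singleton_subset_iff.2 ha)
        have := hpos a
        linarith
      · intro h1
        have : A.eraseNone.card = 0 := by omega
        rw [Finset.card_eq_zero.1 this]
        exact rt_empty hδ hr
    · rw [if_neg h, card_eraseNone_of_none_not_mem h]
      exact hδ.2.1 _
  · intro A B C hB
    have hBne : B.Nonempty := Finset.nonempty_iff_ne_empty.2 hB
    unfold optionDiv
    simp only [Finset.eraseNone_union]
    set a := A.eraseNone with ha_def
    set b := B.eraseNone with hb_def
    set c := C.eraseNone with hc_def
    have subm : ∀ u v w : Finset X, rt δ r (u ∪ w) ≤ rt δ r (u ∪ v) + rt δ r (v ∪ w) := by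
      intro u v w
      have h1 := rt_subadd hδ hr (u ∪ v) (v ∪ w)
      have h2 : rt δ r (u ∪ w) ≤ rt δ r ((u ∪ v) ∪ (v ∪ w)) := by
        refine rt_mono hδ hr ?_
        intro y hy
        simp only [Finset.mem_union] at hy ⊢
        tauto
      linarith
    have hbne : none ∉ B → b.Nonempty := by
      intro hnB
      obtain ⟨y, hy⟩ := hBne
      cases y with
      | none => exact absurd hy hnB
      | some x => exact ⟨x, Finset.mem_eraseNone.2 hy⟩
    by_cases hnA : none ∈ A <;> by_cases hnB : none ∈ B <;> by_cases hnC : none ∈ C <;>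
      simp only [Finset.mem_union, hnA, hnB, hnC, if_true, if_false,
        true_or, or_true, false_or, or_false, not_false_iff, or_self]
    · exact subm a b c
    · exact subm a b c
    · exact subm a b c
    · exact rt_tri hδ hr a b c (hbne hnB)
    · exact subm a b c
    · have h1 := div_le_rt_add hδ hr (a ∪ b) (b ∪ c)
      refine le_trans (div_mono hδ ?_) h1
      intro y hy
      simp only [Finset.mem_union] at hy ⊢
      tauto
    · have h1 := rt_tri hδ hr c b a (hbne hnB)
      calc rt δ r (a ∪ c) = rt δ r (c ∪ a) := by rw [Finset.union_comm]
        _ ≤ rt δ r (c ∪ b) + δ (b ∪ a) := h1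
        _ = δ (a ∪ b) + rt δ r (b ∪ c) := by
            rw [Finset.union_comm c b, Finset.union_comm b a]; ring
    · have hb : b ≠ ∅ := Finset.nonempty_iff_ne_empty.1 (hbne hnB)
      exact hδ.2.2 a b c hb

end dir2d

lemma inj_to_hyper {X : Type u} (δ : Finset X → ℝ) (hδ : IsDiversity δ)
    (hinj : InjectiveDiversity δ) : DivHyperconvex δ := by
  intro r hr
  by_cases hz : ∃ a : X, rt δ r {a} = 0
  · obtain ⟨a, ha⟩ := hz
    refine ⟨a, fun Y => ?_⟩
    have h := rt_single_zero hδ hr ha Y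
    rwa [Finset.insert_eq] at h
  · push_neg at hz
    have hpos : ∀ a, 0 < rt δ r {a} := fun a =>
      lt_of_le_of_ne (rt_nonneg hδ hr _) (Ne.symm (hz a))
    have hδ₂ := optionDiv_isDiversity hδ hr hpos
    obtain ⟨ψ, hψ, hcomp⟩ := hinj X (Option X) δ (optionDiv δ r) hδ hδ₂ some id
      ⟨Option.some_injective X, fun A => optionDiv_image_some δ r A⟩
      (fun A => by rw [Finset.image_id])
    refine ⟨ψ none, fun Y => ?_⟩
    have h1 := hψ (insert none (Y.image some))
    have hcomp' : ψ ∘ some = id := hcomp.symm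
    have h2 : (insert none (Y.image some)).image ψ = insert (ψ none) Y := by
      rw [Finset.image_insert, Finset.image_image, hcomp', Finset.image_id]
    have h3 : optionDiv δ r (insert none (Y.image some)) = rt δ r Y := by
      unfold optionDiv
      rw [if_pos (Finset.mem_insert_self _ _)]
      congr 1
      ext y; simp [Finset.mem_eraseNone]
    rw [h2, h3] at h1
    rw [← Finset.insert_eq]
    exact le_trans h1 (rt_le_r hδ hr Y)


section dir1
universe v
variable {X : Type v} {δ : Finset X → ℝ}

/-- Any finite subset of a union of a nonempty chain lies in one member. -/
lemma finset_subset_chain_mem {α : Type*} {c : Set (Set α)} (hch : IsChain (· ⊆ ·) c)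
    (hne : c.Nonempty) (F : Finset α) (hF : ↑F ⊆ ⋃₀ c) : ∃ G ∈ c, ↑F ⊆ G := by
  classical
  induction F using Finset.induction_on with
  | empty => exact ⟨hne.choose, hne.choose_spec, by simp⟩
  | @insert p F hp ih =>
    have hF' : ↑F ⊆ ⋃₀ c := by
      refine subset_trans ?_ hF
      intro q hq; simp only [Finset.coe_insert, Set.mem_insert_iff]; right; exact hq
    obtain ⟨G₁, hG₁c, hG₁⟩ := ih hF'
    have hpc : p ∈ ⋃₀ c := hF (by simp)
    obtain ⟨G₂, hG₂c, hpG₂⟩ := hpc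
    rcases hch.total hG₁c hG₂c with h | h
    · refine ⟨G₂, hG₂c, ?_⟩
      intro q hq
      simp only [Finset.coe_insert, Set.mem_insert_iff] at hq
      rcases hq with rfl | hq
      · exact hpG₂
      · exact h (hG₁ hq)
    · refine ⟨G₁, hG₁c, ?_⟩
      intro q hq
      simp only [Finset.coe_insert, Set.mem_insert_iff] at hq
      rcases hq with rfl | hq
      · exact h hpG₂
      · exact hG₁ hq

lemma hyper_to_inj {X : Type u} (δ : Finset X → ℝ) (hδ : IsDiversity δ)
    (hhyp : DivHyperconvex δ) : InjectiveDiversity δ := by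
  intro Y₁ Y₂ δ₁ δ₂ hδ₁ hδ₂ π φ hπ hφ
  classical
  -- X is nonempty
  have hXne : Nonempty X := by
    by_contra h
    rw [not_nonempty_iff] at h
    obtain ⟨z, -⟩ := hhyp (fun _ => 0) (fun 𝓐 => by
      refine le_trans (le_of_eq (div_card_le_one hδ
        (Finset.card_le_one.2 fun a ha b hb => (h.false a).elim))) ?_
      simp)
    exact h.false z
  -- the collection of good partial graphs
  set S : Set (Set (Y₂ × X)) :=
    {G | (∀ p ∈ G, ∀ q ∈ G, Prod.fst p = Prod.fst q → Prod.snd p = Prod.snd q) ∧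
      (∀ a : Y₁, (π a, φ a) ∈ G) ∧
      (∀ F : Finset (Y₂ × X), ↑F ⊆ G →
        δ (F.image Prod.snd) ≤ δ₂ (F.image Prod.fst))} with hS_def
  -- the initial graph
  have hG₀ : Set.range (fun a : Y₁ => (π a, φ a)) ∈ S := by
    refine ⟨?_, ?_, ?_⟩
    · rintro p ⟨a, rfl⟩ q ⟨b, rfl⟩ hfst
      have : a = b := hπ.1 hfst
      rw [this]
    · intro a; exact ⟨a, rfl⟩
    · intro F hF
      have hex : ∀ p ∈ F, ∃ a : Y₁, (π a, φ a) = p := fun p hp => hF hp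
      set g : {p // p ∈ F} → Y₁ := fun p => (hex p.1 p.2).choose with hg_def
      have hgspec : ∀ p : {p // p ∈ F}, (π (g p), φ (g p)) = p.1 :=
        fun p => (hex p.1 p.2).choose_spec
      set A : Finset Y₁ := F.attach.image g with hA_def
      have h1 : A.image π = F.image Prod.fst := by
        apply Finset.Subset.antisymm
        · intro y hy
          obtain ⟨a, ha, rfl⟩ := Finset.mem_image.1 hy
          obtain ⟨p, -, rfl⟩ := Finset.mem_image.1 ha
          exact Finset.mem_image.2 ⟨p.1, p.2, (congrArg Prod.fst (hgspec p)).symm⟩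
        · intro y hy
          obtain ⟨p, hp, rfl⟩ := Finset.mem_image.1 hy
          exact Finset.mem_image.2 ⟨g ⟨p, hp⟩,
            Finset.mem_image.2 ⟨⟨p, hp⟩, Finset.mem_attach _ _, rfl⟩,
            congrArg Prod.fst (hgspec ⟨p, hp⟩)⟩
      have h2 : A.image φ = F.image Prod.snd := by
        apply Finset.Subset.antisymm
        · intro y hy
          obtain ⟨a, ha, rfl⟩ := Finset.mem_image.1 hy
          obtain ⟨p, -, rfl⟩ := Finset.mem_image.1 ha
          exact Finset.mem_image.2 ⟨p.1, p.2, (congrArg Prod.snd (hgspec p)).symm⟩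
        · intro y hy
          obtain ⟨p, hp, rfl⟩ := Finset.mem_image.1 hy
          exact Finset.mem_image.2 ⟨g ⟨p, hp⟩,
            Finset.mem_image.2 ⟨⟨p, hp⟩, Finset.mem_attach _ _, rfl⟩,
            congrArg Prod.snd (hgspec ⟨p, hp⟩)⟩
      calc δ (F.image Prod.snd) = δ (A.image φ) := by rw [h2]
        _ ≤ δ₁ A := hφ A
        _ = δ₂ (A.image π) := (hπ.2 A).symm
        _ = δ₂ (F.image Prod.fst) := by rw [h1]
  -- Zorn's lemma
  obtain ⟨G, hG₀G, hGmax⟩ := zorn_subset_nonempty S (by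
    intro c hcS hch hcne
    refine ⟨⋃₀ c, ⟨?_, ?_, ?_⟩, fun s hs => Set.subset_sUnion_of_mem hs⟩
    · rintro p ⟨G₁, hG₁c, hpG₁⟩ q ⟨G₂, hG₂c, hqG₂⟩ hfst
      rcases hch.total hG₁c hG₂c with h | h
      · exact (hcS hG₂c).1 p (h hpG₁) q hqG₂ hfst
      · exact (hcS hG₁c).1 p hpG₁ q (h hqG₂) hfst
    · intro a
      obtain ⟨G₁, hG₁c⟩ := hcne
      exact ⟨G₁, hG₁c, (hcS hG₁c).2.1 a⟩
    · intro F hF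
      obtain ⟨G₁, hG₁c, hFG₁⟩ := finset_subset_chain_mem hch hcne F hF
      exact (hcS hG₁c).2.2 F hFG₁) _ hG₀
  have hGS : G ∈ S := hGmax.1
  -- G is a total graph
  have hdom : ∀ y : Y₂, ∃ x : X, (y, x) ∈ G := by
    by_contra hy
    push_neg at hy
    obtain ⟨y₀, hy₀⟩ := hy
    -- in both cases we find z with `insert (y₀, z) G ∈ S`, contradicting maximality
    suffices hsuff : ∃ z : X, insert (y₀, z) G ∈ S by
      obtain ⟨z, hz⟩ := hsuff
      have hsub : G ⊆ insert (y₀, z) G := Set.subset_insert _ _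
      have := hGmax.2 hz hsub (Set.mem_insert (y₀, z) G)
      exact hy₀ z this
    rcases Set.eq_empty_or_nonempty G with hGe | hGne
    · -- G empty
      obtain ⟨x₀⟩ := hXne
      refine ⟨x₀, ?_, ?_, ?_⟩
      · rintro p hp q hq hfst
        rw [hGe] at hp hq
        simp only [Set.mem_insert_iff, Set.mem_empty_iff_false, or_false] at hp hq
        rw [hp, hq]
      · intro a
        have := hGS.2.1 a
        rw [hGe] at this
        exact absurd this (Set.notMem_empty _)
      · intro F hF
        have himg : F.image Prod.snd ⊆ {x₀} := by
          intro x hx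
          obtain ⟨p, hpF, rfl⟩ := Finset.mem_image.1 hx
          have := hF hpF
          rw [hGe] at this
          simp only [Set.mem_insert_iff, Set.mem_empty_iff_false, or_false] at this
          rw [this]
          simp
        have hcard : (F.image Prod.snd).card ≤ 1 :=
          le_trans (Finset.card_le_card himg) (by simp)
        rw [div_card_le_one hδ hcard]
        exact div_nonneg' hδ₂ _
    · -- G nonempty
      obtain ⟨p₀, hp₀⟩ := hGne
      set d₀ := p₀.1
      set x₀ := p₀.2
      set Cst : ℝ := δ₂ (insert y₀ {d₀}) with hCst_def
      have hCst0 : 0 ≤ Cst := div_nonneg' hδ₂ _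
      set pen : Finset X → ℝ := fun W => if W = ∅ then 0 else δ (insert x₀ W) + Cst
        with hpen_def
      have hpen0 : ∀ W, 0 ≤ pen W := by
        intro W
        simp only [hpen_def]
        split
        · exact le_refl 0
        · exact add_nonneg (div_nonneg' hδ _) hCst0
      set E : Finset X → Set ℝ := fun B => {c | ∃ F : Finset (Y₂ × X), ↑F ⊆ G ∧
        c = δ₂ (insert y₀ (F.image Prod.fst)) + pen (B \ F.image Prod.snd)} with hE_def
      have hEne : ∀ B, (E B).Nonempty := fun B =>
        ⟨_, ⟨∅, by simp, rfl⟩⟩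
      have hEbdd : ∀ B, BddBelow (E B) := fun B => ⟨0, by
        rintro c ⟨F, hF, rfl⟩
        exact add_nonneg (div_nonneg' hδ₂ _) (hpen0 _)⟩
      set rr : Finset X → ℝ := fun B => sInf (E B) with hrr_def
      have hadm : ∀ 𝓐 : Finset (Finset X), δ (𝓐.sup id) ≤ ∑ B ∈ 𝓐, rr B := by
        intro 𝓐
        rcases Finset.eq_empty_or_nonempty 𝓐 with rfl | h𝓐ne
        · simp [div_empty hδ]
        refine le_of_forall_pos_le_add fun ε hε => ?_
        have hcard : (0:ℝ) < (𝓐.card : ℝ) := by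
          exact_mod_cast Finset.card_pos.2 h𝓐ne
        set ε' := ε / (𝓐.card : ℝ) with hε'_def
        have hε' : 0 < ε' := div_pos hε hcard
        have hch : ∀ B ∈ 𝓐, ∃ F : Finset (Y₂ × X), ↑F ⊆ G ∧
            δ₂ (insert y₀ (F.image Prod.fst)) + pen (B \ F.image Prod.snd) < rr B + ε' := by
          intro B hB
          obtain ⟨c, hc, hlt⟩ := Real.lt_sInf_add_pos (hEne B) hε'
          obtain ⟨F, hFG, rfl⟩ := hc
          exact ⟨F, hFG, hlt⟩
        choose! Fc hFcG hFlt using hch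
        set Fall : Finset (Y₂ × X) := 𝓐.biUnion Fc with hFall_def
        have hFallG : ↑Fall ⊆ G := by
          intro p hp
          simp only [hFall_def, Finset.coe_biUnion, Set.mem_iUnion, Finset.mem_coe] at hp
          obtain ⟨B, hB, hpB⟩ := hp
          exact hFcG B hB hpB
        have hsup1 : 𝓐.sup (fun B => (Fc B).image Prod.fst) = Fall.image Prod.fst := by
          ext y
          simp only [Finset.mem_sup, Finset.mem_image, hFall_def, Finset.mem_biUnion]
          constructor
          · rintro ⟨B, hB, p, hp, rfl⟩
            exact ⟨p, ⟨B, hB, hp⟩, rfl⟩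
          · rintro ⟨p, ⟨B, hB, hp⟩, rfl⟩
            exact ⟨B, hB, p, hp, rfl⟩
        have hi : δ₂ (insert y₀ (Fall.image Prod.fst)) ≤
            ∑ B ∈ 𝓐, δ₂ (insert y₀ ((Fc B).image Prod.fst)) := by
          have h := div_sup_insert hδ₂ 𝓐 (fun B => (Fc B).image Prod.fst) y₀
          rwa [hsup1] at h
        set W : Finset X → Finset X := fun B => B \ (Fc B).image Prod.snd with hW_def
        have hsub : ∀ B ∈ 𝓐, B ⊆ (Fc B).image Prod.snd ∪ W B := by
          intro B hB x hx
          by_cases hx2 : x ∈ (Fc B).image Prod.snd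
          · exact Finset.mem_union_left _ hx2
          · exact Finset.mem_union_right _ (Finset.mem_sdiff.2 ⟨hx, hx2⟩)
        have hFsnd : ∀ B ∈ 𝓐, (Fc B).image Prod.snd ⊆ Fall.image Prod.snd := by
          intro B hB x hx
          obtain ⟨p, hpF, rfl⟩ := Finset.mem_image.1 hx
          exact Finset.mem_image.2 ⟨p, Finset.mem_biUnion.2 ⟨B, hB, hpF⟩, rfl⟩
        have hsum2 : ∑ B ∈ 𝓐, (rr B + ε') = ∑ B ∈ 𝓐, rr B + ε := by
          rw [Finset.sum_add_distrib, Finset.sum_const, nsmul_eq_mul]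
          congr 1
          rw [hε'_def, mul_div_cancel₀ _ (ne_of_gt hcard)]
        by_cases hWe : ∀ B ∈ 𝓐, W B = ∅
        · have hcov : 𝓐.sup id ⊆ Fall.image Prod.snd := by
            intro x hx
            rw [Finset.mem_sup] at hx
            obtain ⟨B, hB, hxB⟩ := hx
            have h1 := hsub B hB hxB
            rw [hWe B hB, Finset.union_empty] at h1
            exact hFsnd B hB h1
          have hA1 : δ (𝓐.sup id) ≤ δ (Fall.image Prod.snd) := div_mono hδ hcov
          have hA2 : δ (Fall.image Prod.snd) ≤ δ₂ (Fall.image Prod.fst) :=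
            hGS.2.2 Fall hFallG
          have hA3 : δ₂ (Fall.image Prod.fst) ≤ δ₂ (insert y₀ (Fall.image Prod.fst)) :=
            div_insert_mono hδ₂ _ _
          have hsum : ∑ B ∈ 𝓐, δ₂ (insert y₀ ((Fc B).image Prod.fst)) <
              ∑ B ∈ 𝓐, (rr B + ε') := by
            refine Finset.sum_lt_sum_of_nonempty h𝓐ne fun B hB => ?_
            exact lt_of_le_of_lt (le_add_of_nonneg_right (hpen0 _)) (hFlt B hB)
          rw [hsum2] at hsum
          linarith
        · push_neg at hWe
          obtain ⟨B₁, hB₁, hWB₁⟩ := hWe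
          set 𝓣 := 𝓐.filter (fun B => W B ≠ ∅) with h𝓣_def
          have hB₁𝓣 : B₁ ∈ 𝓣 := Finset.mem_filter.2 ⟨hB₁, Finset.nonempty_iff_ne_empty.1 hWB₁⟩
          have h𝓣ne : 𝓣.Nonempty := ⟨B₁, hB₁𝓣⟩
          have h𝓣card : (1:ℝ) ≤ (𝓣.card : ℝ) := by
            exact_mod_cast Finset.card_pos.2 h𝓣ne
          have hpens : Cst + δ (insert x₀ (𝓣.sup W)) ≤ ∑ B ∈ 𝓐, pen (W B) := by
            have e1 : ∑ B ∈ 𝓣, pen (W B) = ∑ B ∈ 𝓐, pen (W B) := by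
              refine Finset.sum_subset (Finset.filter_subset _ _) fun B hB hnB => ?_
              have hWB : W B = ∅ := by
                by_contra hc
                exact hnB (Finset.mem_filter.2 ⟨hB, hc⟩)
              rw [hWB, hpen_def]
              simp
            have e2 : ∑ B ∈ 𝓣, pen (W B) =
                ∑ B ∈ 𝓣, δ (insert x₀ (W B)) + (𝓣.card : ℝ) * Cst := by
              have e2a : ∑ B ∈ 𝓣, pen (W B) =
                  ∑ B ∈ 𝓣, (δ (insert x₀ (W B)) + Cst) := by
                refine Finset.sum_congr rfl fun B hB => ?_
                rw [hpen_def]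
                simp only []
                rw [if_neg (Finset.mem_filter.1 hB).2]
              rw [e2a, Finset.sum_add_distrib, Finset.sum_const, nsmul_eq_mul]
            have e3 : δ (insert x₀ (𝓣.sup W)) ≤ ∑ B ∈ 𝓣, δ (insert x₀ (W B)) :=
              div_sup_insert hδ 𝓣 W x₀
            have e4 : Cst ≤ (𝓣.card : ℝ) * Cst := by nlinarith
            rw [← e1, e2]
            linarith
          have hk1 : δ₂ (insert y₀ (Fall.image Prod.fst) ∪ {d₀}) ≤
              δ₂ (insert y₀ (Fall.image Prod.fst)) + Cst := by
            have h := div_tri hδ₂ (insert y₀ (Fall.image Prod.fst)) {y₀} {d₀} (by simp)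
            have e5 : insert y₀ (Fall.image Prod.fst) ∪ {y₀} =
                insert y₀ (Fall.image Prod.fst) := by
              ext t; simp only [Finset.mem_union, Finset.mem_insert, Finset.mem_singleton]
              tauto
            have e6 : ({y₀} : Finset Y₂) ∪ {d₀} = insert y₀ {d₀} := by
              rw [Finset.insert_eq]
            rw [e5, e6] at h
            exact h
          have hk2 : δ (insert x₀ (Fall.image Prod.snd)) ≤
              δ₂ (insert d₀ (Fall.image Prod.fst)) := by
            have hins : ↑(insert p₀ Fall) ⊆ G := by
              intro p hp
              simp only [Finset.coe_insert, Set.mem_insert_iff] at hp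
              rcases hp with rfl | hp
              · exact hp₀
              · exact hFallG hp
            have h := hGS.2.2 (insert p₀ Fall) hins
            rw [Finset.image_insert, Finset.image_insert] at h
            exact h
          have hk3 : δ₂ (insert d₀ (Fall.image Prod.fst)) ≤
              δ₂ (insert y₀ (Fall.image Prod.fst) ∪ {d₀}) := by
            refine div_mono hδ₂ ?_
            intro t ht
            simp only [Finset.mem_insert, Finset.mem_union, Finset.mem_singleton] at ht ⊢
            tauto
          have hcov : 𝓐.sup id ⊆
              insert x₀ (Fall.image Prod.snd) ∪ insert x₀ (𝓣.sup W) := by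
            intro x hx
            rw [Finset.mem_sup] at hx
            obtain ⟨B, hB, hxB⟩ := hx
            rcases Finset.mem_union.1 (hsub B hB hxB) with h | h
            · exact Finset.mem_union_left _ (Finset.mem_insert_of_mem (hFsnd B hB h))
            · refine Finset.mem_union_right _ (Finset.mem_insert_of_mem ?_)
              rw [Finset.mem_sup]
              exact ⟨B, Finset.mem_filter.2 ⟨hB, Finset.ne_empty_of_mem h⟩, h⟩
          have hstar : δ (insert x₀ (Fall.image Prod.snd) ∪ insert x₀ (𝓣.sup W)) ≤
              δ (insert x₀ (Fall.image Prod.snd)) + δ (insert x₀ (𝓣.sup W)) :=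
            div_star hδ (Finset.mem_insert_self _ _) (Finset.mem_insert_self _ _)
          have hsum : ∑ B ∈ 𝓐, (δ₂ (insert y₀ ((Fc B).image Prod.fst)) + pen (W B)) <
              ∑ B ∈ 𝓐, (rr B + ε') :=
            Finset.sum_lt_sum_of_nonempty h𝓐ne fun B hB => hFlt B hB
          rw [hsum2, Finset.sum_add_distrib] at hsum
          have hmono := div_mono hδ hcov
          linarith
      obtain ⟨z, hz⟩ := hhyp rr hadm
      refine ⟨z, ?_, ?_, ?_⟩
      · rintro p hp q hq hfst
        rcases Set.mem_insert_iff.1 hp with rfl | hpG <;>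
          rcases Set.mem_insert_iff.1 hq with h | hqG
        · rw [h]
        · exfalso
          apply hy₀ q.2
          have hq1 : q.1 = y₀ := hfst.symm
          have he : (y₀, q.2) = q := by rw [← hq1]
          rwa [he]
        · exfalso
          apply hy₀ p.2
          have hp1 : p.1 = y₀ := by rw [hfst, h]
          have he : (y₀, p.2) = p := by rw [← hp1]
          rwa [he]
        · exact hGS.1 p hpG q hqG hfst
      · intro a
        exact Set.mem_insert_of_mem _ (hGS.2.1 a)
      · intro F hF
        by_cases hpF : (y₀, z) ∈ F
        · set F' := F.erase (y₀, z) with hF'_def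
          have hF'G : ↑F' ⊆ G := by
            intro p hp
            simp only [hF'_def, Finset.coe_erase, Set.mem_diff, Finset.mem_coe,
              Set.mem_singleton_iff] at hp
            rcases Set.mem_insert_iff.1 (hF hp.1) with h | h
            · exact absurd h hp.2
            · exact h
          have heF : F = insert (y₀, z) F' := (Finset.insert_erase hpF).symm
          rw [heF, Finset.image_insert, Finset.image_insert]
          have hb : δ ({z} ∪ F'.image Prod.snd) ≤ rr (F'.image Prod.snd) := hz _
          rw [← Finset.insert_eq] at hb
          have hmem : δ₂ (insert y₀ (F'.image Prod.fst)) +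
              pen (F'.image Prod.snd \ F'.image Prod.snd) ∈ E (F'.image Prod.snd) :=
            ⟨F', hF'G, rfl⟩
          have hle : rr (F'.image Prod.snd) ≤ δ₂ (insert y₀ (F'.image Prod.fst)) := by
            have h := csInf_le (hEbdd _) hmem
            have hpen : pen (F'.image Prod.snd \ F'.image Prod.snd) = 0 := by
              rw [Finset.sdiff_self, hpen_def]
              simp
            rw [hpen] at h
            simpa using h
          exact le_trans hb hle
        · have hFG2 : ↑F ⊆ G := by
            intro p hp
            rcases Set.mem_insert_iff.1 (hF hp) with h | h
            · exact absurd (h ▸ hp) hpF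
            · exact h
          exact hGS.2.2 F hFG2
  -- define ψ
  set ψ : Y₂ → X := fun y => (hdom y).choose with hψ_def
  have hψG : ∀ y, (y, ψ y) ∈ G := fun y => (hdom y).choose_spec
  refine ⟨ψ, ?_, ?_⟩
  · intro A
    set F : Finset (Y₂ × X) := A.image (fun y => (y, ψ y)) with hF_def
    have hFG : ↑F ⊆ G := by
      intro p hp
      simp only [hF_def, Finset.coe_image, Set.mem_image, Finset.mem_coe] at hp
      obtain ⟨y, hy, rfl⟩ := hp
      exact hψG y
    have h1 : F.image Prod.fst = A := by
      rw [hF_def, Finset.image_image]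
      exact Finset.image_id'
    have h2 : F.image Prod.snd = A.image ψ := by
      rw [hF_def, Finset.image_image]
      rfl
    have := hGS.2.2 F hFG
    rwa [h1, h2] at this
  · funext a
    have h1 : (π a, φ a) ∈ G := hGS.2.1 a
    have h2 : (π a, ψ (π a)) ∈ G := hψG (π a)
    exact hGS.1 _ h1 _ h2 rfl

end dir1

/-- a diversity is injective if and only if it is hyperconvex. -/
theorem injective_iff_hyperconvex {X : Type u} (δ : Finset X → ℝ) (hδ : IsDiversity δ) :
    InjectiveDiversity δ ↔ DivHyperconvex δ := by
  constructor
  · exact fun h => inj_to_hyper δ hδ h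
  · exact fun h => hyper_to_inj δ hδ h

end
end

section
/- For any diversity (X, δ), the tight span (T_X, δ_T) is hyperconvex: for every function r from finite subsets of T_X to ℝ such that Σ_{F ∈ 𝓕} r(F) ≥ δ_T(⋃_{F ∈ 𝓕} F) for all finite collections 𝓕 of finite subsets of T_X, there exists g ∈ T_X with δ_T(G ∪ {g}) ≤ r(G) for all finite G ⊆ T_X. -/
open scoped Classical

noncomputable section

namespace TSAux

/-! ### Real helpers -/

lemma le_add_eps {a b : ℝ} (h : ∀ ε : ℝ, 0 < ε → a ≤ b + ε) : a ≤ b := by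
  by_contra hc
  push_neg at hc
  have := h ((a - b) / 2) (by linarith)
  linarith

lemma sum_union_le {α : Type*} [DecidableEq α] (f : α → ℝ) (s t : Finset α) (hf : ∀ a, 0 ≤ f a) :
    ∑ a ∈ s ∪ t, f a ≤ ∑ a ∈ s, f a + ∑ a ∈ t, f a := by
  have h := Finset.sum_union_inter (s₁ := s) (s₂ := t) (f := f)
  have h2 : 0 ≤ ∑ a ∈ s ∩ t, f a := Finset.sum_nonneg fun a _ => hf a
  linarith

lemma sum_insert_le {α : Type*} [DecidableEq α] (f : α → ℝ) (a : α) (s : Finset α) (hf : ∀ a, 0 ≤ f a) :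
    ∑ x ∈ insert a s, f x ≤ f a + ∑ x ∈ s, f x := by
  rw [Finset.insert_eq]
  simpa using sum_union_le f {a} s hf

/-! ### Generic lemmas about `P` and `T` over an arbitrary ground function `D` -/

section Generic

variable {Y : Type*} {D : Finset Y → ℝ}

lemma memP_ge {f : Finset Y → ℝ} (hf : MemP D f) (A : Finset Y) : D A ≤ f A := by
  have h := hf.2 {A}
  simpa using h

lemma memP_nonneg (hD : ∀ A, 0 ≤ D A) {f : Finset Y → ℝ} (hf : MemP D f) (A : Finset Y) :
    0 ≤ f A := (hD A).trans (memP_ge hf A)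

lemma memP_insert (hD : ∀ A, 0 ≤ D A) {f : Finset Y → ℝ} (hf : MemP D f) (A : Finset Y)
    (B : Finset (Finset Y)) :
    D ((insert A B).sup id) ≤ f A + ∑ C ∈ B, f C :=
  (hf.2 _).trans (sum_insert_le _ _ _ (memP_nonneg hD hf))

lemma chain_exists_ub {α : Type*} [Preorder α] {c : Set α} (hc : IsChain (· ≤ ·) c)
    {y₀ : α} (hy₀ : y₀ ∈ c) {ι : Type*} (s : Finset ι) (F : ι → α)
    (hF : ∀ i ∈ s, F i ∈ c) : ∃ m ∈ c, ∀ i ∈ s, F i ≤ m := by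
  classical
  revert hF
  induction s using Finset.induction_on with
  | empty => exact fun _ => ⟨y₀, hy₀, by simp⟩
  | @insert a s ha ih =>
    intro hF
    obtain ⟨m, hm, hms⟩ := ih (fun i hi => hF i (Finset.mem_insert_of_mem hi))
    have hFa : F a ∈ c := hF a (Finset.mem_insert_self a s)
    rcases eq_or_ne (F a) m with he | hne
    · exact ⟨m, hm, fun i hi => by
        rcases Finset.mem_insert.1 hi with rfl | hi
        exacts [he.le, hms i hi]⟩
    · rcases hc hFa hm hne with h | h
      · exact ⟨m, hm, fun i hi => by
          rcases Finset.mem_insert.1 hi with rfl | hi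
          exacts [h, hms i hi]⟩
      · exact ⟨F a, hFa, fun i hi => by
          rcases Finset.mem_insert.1 hi with rfl | hi
          exacts [le_rfl, (hms i hi).trans h]⟩

lemma exists_minimalP (hD0 : D ∅ = 0) (hD : ∀ A, 0 ≤ D A)
    {f : Finset Y → ℝ} (hf : MemP D f) : ∃ g, MemT D g ∧ ∀ A, g A ≤ f A := by
  classical
  let N : (Finset Y → ℝ) → (Finset Y → ℝ) := fun p A => -(p A)
  have hNN : ∀ p, N (N p) = p := fun p => funext fun A => neg_neg _
  let S : Set (Finset Y → ℝ) := {p | MemP D (N p) ∧ ∀ A, N p A ≤ f A}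
  have hchain : ∀ c ⊆ S, IsChain (· ≤ ·) c → ∀ y ∈ c, ∃ ub ∈ S, ∀ z ∈ c, z ≤ ub := by
    intro c hcS hc y hy
    set ub : Finset Y → ℝ := fun A => sSup ((fun p => p A) '' c) with hubdef
    have hbdd : ∀ A, BddAbove ((fun p => p A) '' c) := by
      intro A
      refine ⟨-(D A), ?_⟩
      rintro v ⟨p, hp, rfl⟩
      have h1 := memP_ge (hcS hp).1 A
      simp only [N] at h1
      linarith
    have hne : ∀ A, ((fun p => p A) '' c).Nonempty := fun A => ⟨y A, ⟨y, hy, rfl⟩⟩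
    have hub : ∀ z ∈ c, z ≤ ub := fun z hz A => le_csSup (hbdd A) ⟨z, hz, rfl⟩
    have hub0 : ub ∅ = 0 := by
      apply le_antisymm
      · apply csSup_le (hne ∅)
        rintro v ⟨p, hp, rfl⟩
        have h1 := (hcS hp).1.1
        have h2 : p ∅ = 0 := by
          have : -(p ∅) = 0 := h1
          linarith
        simp [h2]
      · refine le_csSup (hbdd ∅) ?_
        have h1 := (hcS hy).1.1
        have h2 : y ∅ = 0 := by
          have : -(y ∅) = 0 := h1
          linarith
        exact ⟨y, hy, h2⟩
    refine ⟨ub, ⟨⟨?_, ?_⟩, ?_⟩, hub⟩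
    · show -(ub ∅) = 0
      rw [hub0, neg_zero]
    · intro 𝓐
      rcases Finset.eq_empty_or_nonempty 𝓐 with rfl | h𝓐
      · simp [hD0]
      refine le_add_eps (fun ε hε => ?_)
      have hcard : (0:ℝ) < 𝓐.card := by
        exact_mod_cast Finset.card_pos.mpr h𝓐
      set ε' := ε / 𝓐.card with hε'
      have hε'pos : 0 < ε' := div_pos hε hcard
      have hpick : ∀ A : Finset Y, ∃ p, p ∈ c ∧ (A ∈ 𝓐 → ub A - ε' < p A) := by
        intro A
        have h1 : ub A - ε' < sSup ((fun p => p A) '' c) := by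
          have : ub A - ε' < ub A := by linarith
          simpa [hubdef] using this
        obtain ⟨v, ⟨p, hp, rfl⟩, hv⟩ := exists_lt_of_lt_csSup (hne A) h1
        exact ⟨p, hp, fun _ => hv⟩
      choose pf hpf1 hpf2 using hpick
      obtain ⟨mx, hmx, hmxle⟩ := chain_exists_ub hc hy 𝓐 pf (fun A _ => hpf1 A)
      have h2 := (hcS hmx).1.2 𝓐
      have h3 : ∀ A ∈ 𝓐, N mx A ≤ -(ub A) + ε' := by
        intro A hA
        have h4 := hpf2 A hA
        have h5 : pf A A ≤ mx A := hmxle A hA A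
        simp only [N]
        linarith
      calc D (𝓐.sup id) ≤ ∑ A ∈ 𝓐, N mx A := h2
        _ ≤ ∑ A ∈ 𝓐, (-(ub A) + ε') := Finset.sum_le_sum h3
        _ = ∑ A ∈ 𝓐, -(ub A) + 𝓐.card * ε' := by
            rw [Finset.sum_add_distrib, Finset.sum_const, nsmul_eq_mul]
        _ = ∑ A ∈ 𝓐, -(ub A) + ε := by
            rw [hε']
            field_simp
      -- done
    · intro A
      have h1 : y A ≤ ub A := hub y hy A
      have h2 := (hcS hy).2 A
      simp only [N] at h2 ⊢
      linarith
  have hNfS : N f ∈ S := by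
    constructor
    · rw [hNN]; exact hf
    · intro A
      have : N (N f) A = f A := by rw [hNN]
      rw [this]
  obtain ⟨m, hfm, hmmax⟩ := zorn_le_nonempty₀ S hchain (N f) hNfS
  have hmS : m ∈ S := hmmax.1
  refine ⟨N m, ⟨hmS.1, ?_⟩, fun A => hmS.2 A⟩
  intro g' hg'P hg'le
  have hmem : N g' ∈ S := by
    constructor
    · rw [hNN]; exact hg'P
    · intro A
      have h1 : N (N g') A = g' A := by rw [hNN]
      rw [h1]
      exact (hg'le A).trans (hmS.2 A)
  have hle : m ≤ N g' := by
    intro A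
    have h1 := hg'le A
    simp only [N] at h1 ⊢
    linarith
  have hge : N g' ≤ m := hmmax.2 hmem hle
  funext A
  have h1 := hge A
  have h2 := hle A
  simp only [N] at h1 h2 ⊢
  linarith

lemma memT_char (hD0 : D ∅ = 0) {g : Finset Y → ℝ} (hg : MemT D g) (A : Finset Y)
    {ε : ℝ} (hε : 0 < ε) :
    ∃ 𝓑 : Finset (Finset Y), g A - ε ≤ D ((insert A 𝓑).sup id) - ∑ B ∈ 𝓑, g B := by
  classical
  by_cases hA : A = ∅
  · subst hA
    refine ⟨∅, ?_⟩
    have h1 : ((insert (∅ : Finset Y) (∅ : Finset (Finset Y))).sup id) = ∅ := by simp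
    rw [h1, hD0, hg.1.1]
    simp
    linarith
  by_contra hcon
  push_neg at hcon
  set g' : Finset Y → ℝ := fun B => if B = A then g A - ε else g B with hg'def
  have hg'P : MemP D g' := by
    constructor
    · show (if (∅ : Finset Y) = A then g A - ε else g ∅) = 0
      rw [if_neg (fun h => hA h.symm)]
      exact hg.1.1
    · intro 𝓐
      by_cases hmem : A ∈ 𝓐
      · have h1 := hcon (𝓐.erase A)
        rw [Finset.insert_erase hmem] at h1
        have h2 : ∑ B ∈ 𝓐, g' B = g A - ε + ∑ B ∈ 𝓐.erase A, g B := by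
          rw [← Finset.add_sum_erase 𝓐 g' hmem]
          congr 1
          · simp [hg'def]
          · refine Finset.sum_congr rfl fun B hB => ?_
            exact if_neg (Finset.ne_of_mem_erase hB)
        rw [h2]
        linarith
      · have h2 : ∑ B ∈ 𝓐, g' B = ∑ B ∈ 𝓐, g B :=
          Finset.sum_congr rfl fun B hB => if_neg (fun h => hmem (by rwa [h] at hB))
        rw [h2]
        exact hg.1.2 𝓐
  have hle : ∀ B, g' B ≤ g B := by
    intro B
    by_cases h : B = A
    · have h2 : g' B = g A - ε := by simp [hg'def, h]
      rw [h2, h]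
      linarith
    · simp [hg'def, h]
  have heq := hg.2 g' hg'P hle
  have h1 := congrFun heq A
  simp only [hg'def, if_pos rfl] at h1
  linarith

end Generic


/-! ### Diversity lemmas -/

section Diversity

variable {X : Type*} {δ : Finset X → ℝ}

lemma dE (hδ : IsDiversity δ) : δ ∅ = 0 := (hδ.2.1 ∅).mpr (by simp)

lemma dS (hδ : IsDiversity δ) (a : X) : δ {a} = 0 := (hδ.2.1 _).mpr (by simp)

lemma d_le_insert (hδ : IsDiversity δ) (q : X) (A : Finset X) : δ A ≤ δ (insert q A) := by
  classical
  have h := hδ.2.2 A {q} ∅ (by simp)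
  rw [Finset.union_empty, Finset.union_empty] at h
  have h2 : A ∪ {q} = insert q A := by
    ext x; simp [or_comm]
  rw [h2, dS hδ] at h
  linarith

lemma d_mono (hδ : IsDiversity δ) {A B : Finset X} (h : A ⊆ B) : δ A ≤ δ B := by
  classical
  have hB : B = A ∪ (B \ A) := by
    rw [Finset.union_sdiff_of_subset h]
  rw [hB]
  generalize B \ A = t
  induction t using Finset.induction_on with
  | empty => simp
  | @insert a s ha ih =>
    calc δ A ≤ δ (A ∪ s) := ih
      _ ≤ δ (insert a (A ∪ s)) := d_le_insert hδ a _
      _ = δ (A ∪ insert a s) := by rw [Finset.union_insert]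

lemma d_glue (hδ : IsDiversity δ) {ι : Type*} (s : Finset ι) (V : ι → Finset X)
    (W : Finset X) (hW : ∀ i ∈ s, ∃ x, x ∈ W ∧ x ∈ V i) :
    δ (W ∪ s.sup V) ≤ δ W + ∑ i ∈ s, δ (V i) := by
  classical
  revert hW
  induction s using Finset.induction_on with
  | empty => intro _; simp
  | @insert a s ha ih =>
    intro hW
    obtain ⟨x, hxW, hxV⟩ := hW a (Finset.mem_insert_self a s)
    have h1 : δ (W ∪ s.sup V ∪ V a) ≤ δ (W ∪ s.sup V ∪ {x}) + δ ({x} ∪ V a) :=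
      hδ.2.2 (W ∪ s.sup V) {x} (V a) (by simp)
    have e1 : W ∪ s.sup V ∪ {x} = W ∪ s.sup V := by
      apply Finset.union_eq_left.mpr
      intro z hz
      rw [Finset.mem_singleton] at hz
      subst hz
      exact Finset.mem_union_left _ hxW
    have e2 : {x} ∪ V a = V a := by
      apply Finset.union_eq_right.mpr
      simpa using hxV
    have e3 : W ∪ (insert a s).sup V = W ∪ s.sup V ∪ V a := by
      rw [Finset.sup_insert, Finset.sup_eq_union]
      ext z
      simp only [Finset.mem_union]
      tauto
    rw [e3, Finset.sum_insert ha]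
    rw [e1, e2] at h1
    have ih2 := ih (fun i hi => hW i (Finset.mem_insert_of_mem hi))
    linarith

lemma kappa_memP (hδ : IsDiversity δ) (a : X) : MemP δ (fun B => δ (insert a B)) := by
  classical
  constructor
  · show δ (insert a ∅) = 0
    simpa using dS hδ a
  · intro 𝓐
    have hsub : 𝓐.sup id ⊆ {a} ∪ 𝓐.sup (fun A => insert a A) := by
      intro z hz
      obtain ⟨A, hA, hzA⟩ := Finset.mem_sup.1 hz
      exact Finset.mem_union_right _
        (Finset.mem_sup.2 ⟨A, hA, Finset.mem_insert_of_mem hzA⟩)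
    calc δ (𝓐.sup id) ≤ δ ({a} ∪ 𝓐.sup (fun A => insert a A)) := d_mono hδ hsub
      _ ≤ δ {a} + ∑ A ∈ 𝓐, δ (insert a A) :=
          d_glue hδ 𝓐 _ {a} (fun A _ => ⟨a, by simp, by simp⟩)
      _ = ∑ A ∈ 𝓐, δ (insert a A) := by rw [dS hδ, zero_add]

lemma kappa_memT (hδ : IsDiversity δ) (a : X) : MemT δ (fun B => δ (insert a B)) := by
  classical
  refine ⟨kappa_memP hδ a, ?_⟩
  intro h hP hle
  have h0 : h {a} = 0 := by
    refine le_antisymm ?_ (memP_nonneg hδ.1 hP {a})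
    have := hle {a}
    simpa [Finset.insert_eq_self.mpr (Finset.mem_singleton_self a), dS hδ] using this
  funext B
  refine le_antisymm (hle B) ?_
  have h2 := memP_insert hδ.1 hP B ({({a} : Finset X)} : Finset (Finset X))
  have h3 : ((insert B ({({a} : Finset X)} : Finset (Finset X))).sup id) = insert a B := by
    rw [Finset.sup_insert, Finset.sup_singleton]
    show B ⊔ {a} = insert a B
    rw [Finset.sup_eq_union]
    ext z; simp [or_comm]
  rw [h3, Finset.sum_singleton, h0] at h2
  linarith

lemma kappa_inj (hδ : IsDiversity δ) {a b : X}
    (h : (fun B => δ (insert a B)) = (fun B => δ (insert b B))) : a = b := by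
  classical
  by_contra hab
  have h1 := congrFun h {a}
  have e1 : insert a ({a} : Finset X) = {a} :=
    Finset.insert_eq_self.mpr (Finset.mem_singleton_self a)
  rw [e1, dS hδ] at h1
  have h2 := (hδ.2.1 _).mp h1.symm
  have h3 : (insert b ({a} : Finset X)).card = 2 := by
    rw [Finset.card_insert_of_notMem (by simp only [Finset.mem_singleton]; exact fun h => hab h.symm)]
    simp
  rw [h3] at h2
  omega

end Diversity


/-! ### `mval` and `deltaT` lemmas -/

section DeltaT

variable {X : Type*} {δ : Finset X → ℝ}

/-- The pointwise infimum of a finite family of functions. -/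
noncomputable def mval (F : Finset (Finset X → ℝ)) (A : Finset X) : ℝ :=
  sInf ((fun f => f A) '' (F : Set (Finset X → ℝ)))

lemma mval_le {F : Finset (Finset X → ℝ)} {f : Finset X → ℝ} (hf : f ∈ F) (A : Finset X) :
    mval F A ≤ f A :=
  csInf_le ((F.finite_toSet.image _).bddBelow) ⟨f, Finset.mem_coe.2 hf, rfl⟩

lemma mval_attain {F : Finset (Finset X → ℝ)} (hF : F.Nonempty) (A : Finset X) :
    ∃ f ∈ F, mval F A = f A := by
  classical
  have h1 : ((fun f => f A) '' (F : Set (Finset X → ℝ)))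
      = ((F.image (fun f => f A) : Finset ℝ) : Set ℝ) := by
    rw [Finset.coe_image]
  rw [mval, h1, Finset.Nonempty.csInf_eq_min' (hF.image _)]
  have h2 := Finset.min'_mem (F.image (fun f => f A)) (hF.image _)
  rw [Finset.mem_image] at h2
  obtain ⟨f, hf, he⟩ := h2
  exact ⟨f, hf, he.symm⟩

lemma mval_nonneg (hδ : IsDiversity δ) {F : Finset (Finset X → ℝ)}
    (hT : ∀ f ∈ F, MemP δ f) (A : Finset X) : 0 ≤ mval F A :=
  Real.sInf_nonneg (by
    rintro v ⟨f, hf, rfl⟩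
    exact memP_nonneg hδ.1 (hT f (Finset.mem_coe.1 hf)) A)

lemma mval_superset {F F' : Finset (Finset X → ℝ)} (hF : F.Nonempty) (hsub : F ⊆ F')
    (A : Finset X) : mval F' A ≤ mval F A := by
  obtain ⟨f, hf, he⟩ := mval_attain hF A
  rw [he]
  exact mval_le (hsub hf) A

lemma mval_union_min {F F' : Finset (Finset X → ℝ)} (hF : F.Nonempty) (hF' : F'.Nonempty)
    (A : Finset X) : mval (F ∪ F') A = min (mval F A) (mval F' A) := by
  classical
  rw [mval, Finset.coe_union, Set.image_union,
    csInf_union ((F.finite_toSet.image _).bddBelow) ((Finset.coe_nonempty.2 hF).image _)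
      ((F'.finite_toSet.image _).bddBelow) ((Finset.coe_nonempty.2 hF').image _)]
  rfl

lemma mval_insert {g : Finset X → ℝ} {F : Finset (Finset X → ℝ)} (hF : F.Nonempty)
    (A : Finset X) : mval (insert g F) A = min (g A) (mval F A) := by
  classical
  rw [mval, Finset.coe_insert, Set.image_insert_eq,
    csInf_insert ((F.finite_toSet.image _).bddBelow) ((Finset.coe_nonempty.2 hF).image _)]
  rfl

lemma mval_singleton (g : Finset X → ℝ) (A : Finset X) : mval {g} A = g A := by
  rw [mval]
  simp

lemma dT_le {F : Finset (Finset X → ℝ)} (hF : F ≠ ∅) {c : ℝ}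
    (h : ∀ 𝓐 : Finset (Finset X), δ (𝓐.sup id) - ∑ A ∈ 𝓐, mval F A ≤ c) :
    deltaT δ F ≤ c := by
  rw [deltaT, if_neg hF]
  refine csSup_le ⟨_, ⟨(∅ : Finset (Finset X)), rfl⟩⟩ ?_
  rintro x ⟨𝓐, rfl⟩
  exact h 𝓐

lemma dT_bddAbove (hδ : IsDiversity δ) (x₀ : X) {F : Finset (Finset X → ℝ)}
    (hF : F.Nonempty) (hT : ∀ f ∈ F, MemP δ f) :
    BddAbove {x : ℝ | ∃ 𝓐 : Finset (Finset X),
      x = δ (𝓐.sup id) - ∑ A ∈ 𝓐, sInf ((fun f => f A) '' (F : Set (Finset X → ℝ)))} := by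
  classical
  refine ⟨∑ f ∈ F, f {x₀}, ?_⟩
  rintro x ⟨𝓐, rfl⟩
  have hch : ∀ A : Finset X, ∃ f, f ∈ F ∧ mval F A = f A := by
    intro A
    obtain ⟨f, hf, he⟩ := mval_attain hF A
    exact ⟨f, hf, he⟩
  choose cf hc1 hc2 using hch
  set V : (Finset X → ℝ) → Finset X :=
    fun f => {x₀} ∪ (𝓐.filter (fun B => cf B = f)).sup id with hV
  have hmono : δ (𝓐.sup id) ≤ δ ({x₀} ∪ F.sup V) := by
    apply d_mono hδ
    intro z hz
    obtain ⟨B, hB, hzB⟩ := Finset.mem_sup.1 hz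
    apply Finset.mem_union_right
    refine Finset.mem_sup.2 ⟨cf B, hc1 B, ?_⟩
    rw [hV]
    exact Finset.mem_union_right _
      (Finset.mem_sup.2 ⟨B, Finset.mem_filter.2 ⟨hB, rfl⟩, hzB⟩)
  have hglue : δ ({x₀} ∪ F.sup V) ≤ δ {x₀} + ∑ f ∈ F, δ (V f) :=
    d_glue hδ F V {x₀} (fun f _ => ⟨x₀, by simp, by rw [hV]; exact Finset.mem_union_left _ (by simp)⟩)
  have hper : ∀ f ∈ F, δ (V f) ≤ f {x₀} + ∑ B ∈ 𝓐.filter (fun B => cf B = f), f B := by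
    intro f hf
    have h1 := memP_insert hδ.1 (hT f hf) {x₀} (𝓐.filter (fun B => cf B = f))
    rw [Finset.sup_insert] at h1
    exact h1
  have hfib : ∑ f ∈ F, ∑ B ∈ 𝓐.filter (fun B => cf B = f), f B
      = ∑ B ∈ 𝓐, mval F B := by
    have h1 : ∀ f ∈ F, ∑ B ∈ 𝓐.filter (fun B => cf B = f), f B
        = ∑ B ∈ 𝓐.filter (fun B => cf B = f), mval F B := by
      intro f _
      refine Finset.sum_congr rfl fun B hB => ?_
      have h2 := (Finset.mem_filter.1 hB).2
      rw [hc2 B, h2]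
    rw [Finset.sum_congr rfl h1]
    exact Finset.sum_fiberwise_of_maps_to (fun B hB => hc1 B) _
  have hsum : ∑ f ∈ F, δ (V f) ≤ ∑ f ∈ F, f {x₀} + ∑ B ∈ 𝓐, mval F B := by
    calc ∑ f ∈ F, δ (V f)
        ≤ ∑ f ∈ F, (f {x₀} + ∑ B ∈ 𝓐.filter (fun B => cf B = f), f B) :=
          Finset.sum_le_sum hper
      _ = ∑ f ∈ F, f {x₀} + ∑ f ∈ F, ∑ B ∈ 𝓐.filter (fun B => cf B = f), f B := by
          rw [Finset.sum_add_distrib]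
      _ = ∑ f ∈ F, f {x₀} + ∑ B ∈ 𝓐, mval F B := by rw [hfib]
  have hfinal : δ (𝓐.sup id) ≤ ∑ f ∈ F, f {x₀} + ∑ B ∈ 𝓐, mval F B := by
    have := dS hδ x₀
    linarith
  have : (∑ B ∈ 𝓐, sInf ((fun f => f B) '' (F : Set (Finset X → ℝ))))
      = ∑ B ∈ 𝓐, mval F B := rfl
  rw [this]
  linarith

lemma le_dT (hδ : IsDiversity δ) (x₀ : X) {F : Finset (Finset X → ℝ)}
    (hF : F.Nonempty) (hT : ∀ f ∈ F, MemP δ f) (𝓐 : Finset (Finset X)) :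
    δ (𝓐.sup id) - ∑ A ∈ 𝓐, mval F A ≤ deltaT δ F := by
  rw [deltaT, if_neg hF.ne_empty]
  exact le_csSup (dT_bddAbove hδ x₀ hF hT) ⟨𝓐, rfl⟩

lemma dT_nonneg (hδ : IsDiversity δ) (F : Finset (Finset X → ℝ)) : 0 ≤ deltaT δ F := by
  rw [deltaT]
  split_ifs with h
  · exact le_refl 0
  · by_cases hb : BddAbove {r : ℝ | ∃ 𝓐 : Finset (Finset X),
        r = δ (𝓐.sup id) - ∑ A ∈ 𝓐, sInf ((fun f => f A) '' (F : Set (Finset X → ℝ)))}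
    · refine le_csSup hb ⟨(∅ : Finset (Finset X)), ?_⟩
      simp [dE hδ]
    · rw [csSup_of_not_bddAbove hb, Real.sSup_empty]

/-- The canonical embedding, as a finite family of raw functions. -/
noncomputable def kraw (δ : Finset X → ℝ) (S : Finset X) : Finset (Finset X → ℝ) :=
  S.image (fun a => fun B => δ (insert a B))

lemma kraw_memT (hδ : IsDiversity δ) (S : Finset X) : ∀ f ∈ kraw δ S, MemT δ f := by
  intro f hf
  simp only [kraw, Finset.mem_image] at hf
  obtain ⟨a, _, rfl⟩ := hf
  exact kappa_memT hδ a

lemma kraw_attain (hδ : IsDiversity δ) {S : Finset X} (hS : S.Nonempty) :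
    ∀ C : Finset X, ∃ a, a ∈ S ∧ mval (kraw δ S) C = δ (insert a C) := by
  classical
  intro C
  obtain ⟨f, hf, he⟩ := mval_attain (hS.image _) C
  simp only [kraw, Finset.mem_image] at hf
  obtain ⟨a, ha, rfl⟩ := hf
  exact ⟨a, ha, he⟩

lemma iso_le (hδ : IsDiversity δ) {S : Finset X} (hS : S.Nonempty) :
    deltaT δ (kraw δ S) ≤ δ S := by
  classical
  apply dT_le (F := kraw δ S) (hS.image _).ne_empty
  intro 𝓒
  choose cc hcc1 hcc2 using kraw_attain hδ hS
  have hmono : δ (𝓒.sup id) ≤ δ (S ∪ 𝓒.sup (fun C => insert (cc C) C)) := by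
    apply d_mono hδ
    intro z hz
    obtain ⟨C, hC, hzC⟩ := Finset.mem_sup.1 hz
    exact Finset.mem_union_right _
      (Finset.mem_sup.2 ⟨C, hC, Finset.mem_insert_of_mem hzC⟩)
  have hglue : δ (S ∪ 𝓒.sup (fun C => insert (cc C) C))
      ≤ δ S + ∑ C ∈ 𝓒, δ (insert (cc C) C) :=
    d_glue hδ 𝓒 _ S (fun C _ => ⟨cc C, hcc1 C, Finset.mem_insert_self _ _⟩)
  have hsum : ∑ C ∈ 𝓒, δ (insert (cc C) C) = ∑ C ∈ 𝓒, mval (kraw δ S) C :=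
    Finset.sum_congr rfl fun C _ => (hcc2 C).symm
  rw [hsum] at hglue
  linarith

lemma iso_ge (hδ : IsDiversity δ) (x₀ : X) {S : Finset X} (hS : S.Nonempty) :
    δ S ≤ deltaT δ (kraw δ S) := by
  classical
  have hT : ∀ f ∈ kraw δ S, MemP δ f := fun f hf => (kraw_memT hδ S f hf).1
  have h := le_dT (F := kraw δ S) hδ x₀ (hS.image _) hT (S.image (fun a => ({a} : Finset X)))
  have hsup : (S.image (fun a => ({a} : Finset X))).sup id = S := by
    ext z
    simp only [Finset.mem_sup, Finset.mem_image, id]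
    constructor
    · rintro ⟨B, ⟨a, ha, rfl⟩, hz⟩
      rw [Finset.mem_singleton] at hz
      rwa [hz]
    · intro hz
      exact ⟨{z}, ⟨z, hz, rfl⟩, Finset.mem_singleton_self z⟩
  have hzero : ∑ B ∈ S.image (fun a => ({a} : Finset X)), mval (kraw δ S) B = 0 := by
    rw [Finset.sum_image (by intro x _ y _ hxy; simpa using hxy)]
    apply Finset.sum_eq_zero
    intro a ha
    refine le_antisymm ?_ (mval_nonneg hδ hT _)
    have h1 : mval (kraw δ S) {a} ≤ (fun B => δ (insert a B)) {a} :=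
      mval_le (Finset.mem_image_of_mem _ ha) {a}
    have h2 : insert a ({a} : Finset X) = {a} :=
      Finset.insert_eq_self.mpr (Finset.mem_singleton_self a)
    calc mval (kraw δ S) {a} ≤ δ (insert a {a}) := h1
      _ = 0 := by rw [h2, dS hδ]
  rw [hsup, hzero] at h
  linarith

lemma image_sup {α β : Type*} [DecidableEq α] [DecidableEq β] (f : α → β)
    (s : Finset (Finset α)) :
    (s.sup id).image f = s.sup (fun A => A.image f) := by
  induction s using Finset.induction_on with
  | empty => simp
  | @insert A s hA ih =>
    rw [Finset.sup_insert, Finset.sup_insert, Finset.sup_eq_union, Finset.sup_eq_union,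
      Finset.image_union, ih]
    rfl

end DeltaT

end TSAux

open TSAux in
/-- the tight span `(T_X, δ_T)` is hyperconvex: for every `r` on finite
subsets of `T_X` with `Σ_{F ∈ 𝓕} r F ≥ δ_T (⋃𝓕)` for all finite collections `𝓕` of finite
subsets of `T_X`, there is `g ∈ T_X` with `δ_T (G ∪ {g}) ≤ r G` for all finite `G ⊆ T_X`. -/
theorem tightSpan_hyperconvex {X : Type*} (δ : Finset X → ℝ) (hδ : IsDiversity δ)
    (r : Finset (Finset X → ℝ) → ℝ)
    (hr : ∀ 𝓕 : Finset (Finset (Finset X → ℝ)),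
      (∀ F ∈ 𝓕, ∀ f ∈ F, MemT δ f) → deltaT δ (𝓕.sup id) ≤ ∑ F ∈ 𝓕, r F) :
    ∃ g : Finset X → ℝ, MemT δ g ∧
      ∀ G : Finset (Finset X → ℝ), (∀ f ∈ G, MemT δ f) →
        deltaT δ (insert g G) ≤ r G := by
  classical
  -- a single-set application of `hr`
  have hrG0 : ∀ G : Finset (Finset X → ℝ), (∀ f ∈ G, MemT δ f) → deltaT δ G ≤ r G := by
    intro G hG
    have h1 := hr {G} (by simpa using hG)
    simpa using h1
  by_cases hX : Nonempty X
  case neg =>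
    -- X is empty: everything is trivial
    have hall : ∀ A : Finset X, A = ∅ := fun A =>
      Finset.eq_empty_of_forall_notMem (fun x _ => hX ⟨x⟩)
    have hd0 : ∀ A : Finset X, δ A = 0 := fun A => (hδ.2.1 A).mpr (by rw [hall A]; simp)
    have hzP : MemP δ (fun _ => (0:ℝ)) := ⟨rfl, fun 𝓐 => by
      rw [hd0]
      simp⟩
    refine ⟨fun _ => 0, ⟨hzP, ?_⟩, ?_⟩
    · intro g' hg' _
      funext A
      rw [hall A]
      exact hg'.1
    · intro G hG
      have h0 : deltaT δ (insert (fun _ => (0:ℝ)) G) ≤ 0 := by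
        apply dT_le (by simp)
        intro 𝓐
        have hnn : ∀ A ∈ 𝓐, 0 ≤ mval (insert (fun _ => (0:ℝ)) G) A := fun A _ =>
          mval_nonneg hδ (by
            intro f hf
            rcases Finset.mem_insert.1 hf with rfl | hf
            · exact hzP
            · exact (hG f hf).1) A
        have h1 := hd0 (𝓐.sup id)
        have h2 : 0 ≤ ∑ A ∈ 𝓐, mval (insert (fun _ => (0:ℝ)) G) A :=
          Finset.sum_nonneg hnn
        linarith
      have h1 : 0 ≤ r G := (dT_nonneg hδ G).trans (hrG0 G hG)
      linarith
  case pos =>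
  obtain ⟨x₀⟩ := hX
  -- the tight span as a subtype, and the induced `δ_T` on it
  let TT := {f : Finset X → ℝ // MemT δ f}
  letI : DecidableEq TT := fun a b => Classical.propDecidable _
  let vl : TT → (Finset X → ℝ) := fun t => t.val
  let ΔT : Finset TT → ℝ := fun F => deltaT δ (F.image vl)
  have hΔ0 : ΔT ∅ = 0 := by
    show deltaT δ ((∅ : Finset TT).image vl) = 0
    rw [Finset.image_empty, deltaT, if_pos rfl]
  have hΔnn : ∀ F, 0 ≤ ΔT F := fun F => dT_nonneg hδ _
  have hvalT : ∀ (s : Finset TT), ∀ f ∈ s.image vl, MemT δ f := by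
    rintro s f hf
    rw [Finset.mem_image] at hf
    obtain ⟨t, _, rfl⟩ := hf
    exact t.2
  have himg_inj : ∀ (s t : Finset TT), s.image vl = t.image vl → s = t := by
    intro s t h
    have key : ∀ (u v : Finset TT), u.image vl = v.image vl → u ⊆ v := by
      intro u v huv x hx
      have h1 : vl x ∈ v.image vl := by
        rw [← huv]
        exact Finset.mem_image_of_mem _ hx
      rw [Finset.mem_image] at h1
      obtain ⟨y, hy, he⟩ := h1
      have : y = x := Subtype.ext he
      rwa [this] at hy
    exact Finset.Subset.antisymm (key s t h) (key t s h.symm)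
  -- `r₀`: the (zero-adjusted) restriction of `r` to the tight span
  let r₀ : Finset TT → ℝ := fun F => if F = ∅ then 0 else r (F.image vl)
  have hr₀P : MemP ΔT r₀ := by
    constructor
    · simp [r₀]
    · intro 𝓕
      set 𝓕₁ := 𝓕.erase ∅ with h𝓕₁
      have hsup1 : 𝓕₁.sup id = 𝓕.sup id := by
        by_cases h : (∅ : Finset TT) ∈ 𝓕
        · conv_rhs => rw [← Finset.insert_erase h]
          rw [Finset.sup_insert]
          show (𝓕.erase ∅).sup id = (∅ : Finset TT) ⊔ (𝓕.erase ∅).sup id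
          rw [Finset.sup_eq_union, Finset.empty_union]
        · rw [h𝓕₁, Finset.erase_eq_of_notMem h]
      have hsum1 : ∑ F ∈ 𝓕, r₀ F = ∑ F ∈ 𝓕₁, r₀ F :=
        (Finset.sum_erase _ (by simp [r₀])).symm
      have hsum2 : ∑ F ∈ 𝓕₁, r₀ F
          = ∑ Fr ∈ 𝓕₁.image (fun F => F.image vl), r Fr := by
        rw [Finset.sum_image (fun x _ y _ h => himg_inj x y h)]
        refine Finset.sum_congr rfl fun F hF => ?_
        have hne : F ≠ ∅ := Finset.ne_of_mem_erase hF
        simp [r₀, hne]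
      have hmem : ∀ Fr ∈ 𝓕₁.image (fun F => F.image vl), ∀ f ∈ Fr, MemT δ f := by
        rintro Fr hFr f hf
        rw [Finset.mem_image] at hFr
        obtain ⟨F, _, rfl⟩ := hFr
        exact hvalT F f hf
      have hmain := hr (𝓕₁.image (fun F => F.image vl)) hmem
      have hsup2 : (𝓕₁.image (fun F => F.image vl)).sup id
          = (𝓕₁.sup id).image vl := by
        rw [Finset.sup_image]
        exact (image_sup vl 𝓕₁).symm
      rw [hsup2, hsup1] at hmain
      calc ΔT (𝓕.sup id) = deltaT δ ((𝓕.sup id).image vl) := rfl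
        _ ≤ ∑ Fr ∈ 𝓕₁.image (fun F => F.image vl), r Fr := hmain
        _ = ∑ F ∈ 𝓕₁, r₀ F := hsum2.symm
        _ = ∑ F ∈ 𝓕, r₀ F := hsum1.symm
  -- minimal element `h` of `P` over the tight span, below `r₀`
  obtain ⟨h, hhT, hhle⟩ := exists_minimalP hΔ0 hΔnn hr₀P
  have hhP : MemP ΔT h := hhT.1
  have hhnn : ∀ F, 0 ≤ h F := memP_nonneg hΔnn hhP
  -- the canonical embedding
  let κ : X → TT := fun a => ⟨fun B => δ (insert a B), kappa_memT hδ a⟩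
  let κs : Finset X → Finset TT := fun A => A.image κ
  have hκs_val : ∀ A : Finset X, (κs A).image vl = kraw δ A := by
    intro A
    show (A.image κ).image vl = kraw δ A
    rw [Finset.image_image]
    rfl
  have hκs_inj : ∀ (A B : Finset X), κs A = κs B → A = B := by
    intro A B hAB
    have key : ∀ (u v : Finset X), κs u = κs v → u ⊆ v := by
      intro u v huv x hx
      have h1 : κ x ∈ κs v := by
        rw [← huv]
        exact Finset.mem_image_of_mem _ hx
      rw [Finset.mem_image] at h1
      obtain ⟨y, hy, he⟩ := h1
      have h2 : y = x := kappa_inj hδ (congrArg Subtype.val he)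
      rwa [h2] at hy
    exact Finset.Subset.antisymm (key A B hAB) (key B A hAB.symm)
  -- `g₀ := h ∘ κs` is in `P_X`
  let g₀ : Finset X → ℝ := fun A => h (κs A)
  have hg₀P : MemP δ g₀ := by
    constructor
    · show h (κs ∅) = 0
      have : κs ∅ = ∅ := by simp [κs]
      rw [this]
      exact hhP.1
    · intro 𝓐
      have hsum : ∑ F ∈ 𝓐.image κs, h F = ∑ A ∈ 𝓐, h (κs A) :=
        Finset.sum_image (fun x _ y _ hxy => hκs_inj x y hxy)
      by_cases hs : 𝓐.sup id = ∅
      · rw [hs, dE hδ]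
        exact Finset.sum_nonneg (fun A _ => hhnn _)
      · have h1 : δ (𝓐.sup id) ≤ deltaT δ (kraw δ (𝓐.sup id)) :=
          iso_ge hδ x₀ (Finset.nonempty_iff_ne_empty.mpr hs)
        have h2 : deltaT δ (kraw δ (𝓐.sup id)) = ΔT (κs (𝓐.sup id)) := by
          show _ = deltaT δ ((κs (𝓐.sup id)).image vl)
          rw [hκs_val]
        have h3 : κs (𝓐.sup id) = (𝓐.image κs).sup id := by
          show (𝓐.sup id).image κ = _
          rw [image_sup κ 𝓐, Finset.sup_image]
          rfl
        calc δ (𝓐.sup id) ≤ deltaT δ (kraw δ (𝓐.sup id)) := h1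
          _ = ΔT (κs (𝓐.sup id)) := h2
          _ = ΔT ((𝓐.image κs).sup id) := congrArg ΔT h3
          _ ≤ ∑ F ∈ 𝓐.image κs, h F := hhP.2 _
          _ = ∑ A ∈ 𝓐, h (κs A) := hsum
  -- minimal element `g` of `P_X` below `g₀`
  obtain ⟨g, hgT, hgle⟩ := exists_minimalP (dE hδ) hδ.1 hg₀P
  have hgP : MemP δ g := hgT.1
  refine ⟨g, hgT, ?_⟩
  intro G hG
  have hGP : ∀ f ∈ G, MemP δ f := fun f hf => (hG f hf).1
  have hrG : deltaT δ G ≤ r G := hrG0 G hG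
  have hrGnn : 0 ≤ r G := (dT_nonneg hδ G).trans hrG
  by_cases hGe : G = ∅
  · subst hGe
    apply dT_le (by simp)
    intro 𝓐
    have h1 : ∑ A ∈ 𝓐, mval (insert g (∅ : Finset (Finset X → ℝ))) A = ∑ A ∈ 𝓐, g A :=
      Finset.sum_congr rfl fun A _ => by
        rw [show (insert g (∅ : Finset (Finset X → ℝ))) = {g} from rfl, mval_singleton]
    rw [h1]
    have h2 := hgP.2 𝓐
    linarith
  · have hGne : G.Nonempty := Finset.nonempty_iff_ne_empty.mpr hGe
    apply dT_le (Finset.insert_nonempty g G).ne_empty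
    intro 𝓐
    refine le_add_eps (fun ε hε => ?_)
    set 𝓐₁ := 𝓐.filter (fun A => g A ≤ mval G A) with h𝓐₁
    set 𝓐₂ := 𝓐.filter (fun A => ¬ g A ≤ mval G A) with h𝓐₂
    have hsplit : ∑ A ∈ 𝓐, mval (insert g G) A
        = ∑ A ∈ 𝓐₁, g A + ∑ A ∈ 𝓐₂, mval G A := by
      rw [← Finset.sum_filter_add_sum_filter_not 𝓐 (fun A => g A ≤ mval G A)
        (fun A => mval (insert g G) A)]
      congr 1
      · refine Finset.sum_congr rfl fun A hA => ?_
        rw [mval_insert hGne A, min_eq_left (Finset.mem_filter.1 hA).2]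
      · refine Finset.sum_congr rfl fun A hA => ?_
        rw [mval_insert hGne A,
          min_eq_right (le_of_not_ge (Finset.mem_filter.1 hA).2)]
    have hsup𝓐 : 𝓐.sup id = 𝓐₁.sup id ∪ 𝓐₂.sup id := by
      rw [← Finset.sup_eq_union, ← Finset.sup_union, Finset.filter_union_filter_not_eq]
    set Cs := 𝓐₂.sup id with hCs
    have hm2nn : 0 ≤ ∑ A ∈ 𝓐₂, mval G A :=
      Finset.sum_nonneg fun A _ => mval_nonneg hδ hGP A
    rw [hsplit]
    by_cases hCse : Cs = ∅
    · have h1 : δ (𝓐.sup id) ≤ ∑ A ∈ 𝓐₁, g A := by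
        rw [hsup𝓐, hCse, Finset.union_empty]
        exact hgP.2 𝓐₁
      linarith
    · have hCsne : Cs.Nonempty := Finset.nonempty_iff_ne_empty.mpr hCse
      have hb : δ (𝓐.sup id) ≤ g Cs + ∑ A ∈ 𝓐₁, g A := by
        have h1 := memP_insert hδ.1 hgP Cs 𝓐₁
        rw [Finset.sup_insert] at h1
        have h2 : (id Cs : Finset X) ⊔ 𝓐₁.sup id = 𝓐.sup id := by
          rw [hsup𝓐]
          show Cs ⊔ 𝓐₁.sup id = 𝓐₁.sup id ∪ Cs
          rw [Finset.sup_eq_union, Finset.union_comm]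
        rwa [h2] at h1
      have hgle' : g Cs ≤ h (κs Cs) := hgle Cs
      obtain ⟨𝓖, hchar0⟩ := memT_char hΔ0 hhT (κs Cs) (half_pos hε)
      set W := 𝓖.sup id with hW
      set rawW := W.image vl with hrawW
      have hΔeq : ΔT ((insert (κs Cs) 𝓖).sup id) = deltaT δ (kraw δ Cs ∪ rawW) := by
        rw [Finset.sup_insert]
        show deltaT δ ((κs Cs ⊔ W).image vl) = _
        rw [Finset.sup_eq_union, Finset.image_union, hκs_val, hrawW]
      have hchar : h (κs Cs) - ε / 2
          ≤ ΔT ((insert (κs Cs) 𝓖).sup id) - ∑ F ∈ 𝓖, h F := hchar0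
      rw [hΔeq] at hchar
      have hWsum_nn : 0 ≤ ∑ F ∈ 𝓖, h F := Finset.sum_nonneg fun F _ => hhnn F
      by_cases hWe : W = ∅
      · have hiso : deltaT δ (kraw δ Cs ∪ rawW) ≤ δ Cs := by
          rw [hrawW, hWe, Finset.image_empty, Finset.union_empty]
          exact iso_le hδ hCsne
        have hfin : δ Cs - ∑ A ∈ 𝓐₂, mval G A ≤ deltaT δ G := by
          have h1 := le_dT hδ x₀ hGne hGP 𝓐₂
          rw [hCs]
          exact h1
        linarith
      · have hWne : W.Nonempty := Finset.nonempty_iff_ne_empty.mpr hWe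
        have hrawWne : rawW.Nonempty := hWne.image _
        have hrawWP : ∀ f ∈ rawW, MemP δ f := fun f hf => (hvalT W f hf).1
        have hkrawne : (kraw δ Cs).Nonempty := hCsne.image _
        have hkrawP : ∀ f ∈ kraw δ Cs, MemP δ f := fun f hf => (kraw_memT hδ Cs f hf).1
        have hGrawWP : ∀ f ∈ G ∪ rawW, MemP δ f := by
          intro f hf
          rcases Finset.mem_union.1 hf with hf | hf
          · exact hGP f hf
          · exact hrawWP f hf
        have hGrawWne : (G ∪ rawW).Nonempty := hGne.mono Finset.subset_union_left
        -- claim 1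
        have claim1 : deltaT δ (kraw δ Cs ∪ rawW)
            ≤ deltaT δ (G ∪ rawW) + ∑ A ∈ 𝓐₂, mval G A := by
          apply dT_le (hkrawne.mono Finset.subset_union_left).ne_empty
          intro 𝓒
          set 𝓒₁ := 𝓒.filter (fun C => mval (kraw δ Cs) C ≤ mval rawW C) with h𝓒₁
          set 𝓒₂ := 𝓒.filter (fun C => ¬ mval (kraw δ Cs) C ≤ mval rawW C) with h𝓒₂
          have hsplit2 : ∑ C ∈ 𝓒, mval (kraw δ Cs ∪ rawW) C
              = ∑ C ∈ 𝓒₁, mval (kraw δ Cs) C + ∑ C ∈ 𝓒₂, mval rawW C := by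
            rw [← Finset.sum_filter_add_sum_filter_not 𝓒
              (fun C => mval (kraw δ Cs) C ≤ mval rawW C)
              (fun C => mval (kraw δ Cs ∪ rawW) C)]
            congr 1
            · refine Finset.sum_congr rfl fun C hC => ?_
              rw [mval_union_min hkrawne hrawWne C,
                min_eq_left (Finset.mem_filter.1 hC).2]
            · refine Finset.sum_congr rfl fun C hC => ?_
              rw [mval_union_min hkrawne hrawWne C,
                min_eq_right (le_of_not_ge (Finset.mem_filter.1 hC).2)]
          choose cc hcc1 hcc2 using kraw_attain hδ hCsne
          have hmono : δ (𝓒.sup id)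
              ≤ δ ((Cs ∪ 𝓒₂.sup id) ∪ 𝓒₁.sup (fun C => insert (cc C) C)) := by
            apply d_mono hδ
            intro z hz
            obtain ⟨C, hC, hzC⟩ := Finset.mem_sup.1 hz
            by_cases hC1 : mval (kraw δ Cs) C ≤ mval rawW C
            · exact Finset.mem_union_right _
                (Finset.mem_sup.2 ⟨C, Finset.mem_filter.2 ⟨hC, hC1⟩,
                  Finset.mem_insert_of_mem hzC⟩)
            · exact Finset.mem_union_left _
                (Finset.mem_union_right _
                  (Finset.mem_sup.2 ⟨C, Finset.mem_filter.2 ⟨hC, hC1⟩, hzC⟩))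
          have hglue : δ ((Cs ∪ 𝓒₂.sup id) ∪ 𝓒₁.sup (fun C => insert (cc C) C))
              ≤ δ (Cs ∪ 𝓒₂.sup id) + ∑ C ∈ 𝓒₁, δ (insert (cc C) C) :=
            d_glue hδ 𝓒₁ _ (Cs ∪ 𝓒₂.sup id)
              (fun C _ => ⟨cc C, Finset.mem_union_left _ (hcc1 C),
                Finset.mem_insert_self _ _⟩)
          have hs1 : ∑ C ∈ 𝓒₁, δ (insert (cc C) C) = ∑ C ∈ 𝓒₁, mval (kraw δ Cs) C :=
            Finset.sum_congr rfl fun C _ => (hcc2 C).symm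
          have hle2 : δ (Cs ∪ 𝓒₂.sup id) - ∑ C ∈ 𝓒₂, mval rawW C
              - ∑ A ∈ 𝓐₂, mval G A ≤ deltaT δ (G ∪ rawW) := by
            have helem := le_dT hδ x₀ hGrawWne hGrawWP (𝓐₂ ∪ 𝓒₂)
            have hsupu : (𝓐₂ ∪ 𝓒₂).sup id = Cs ∪ 𝓒₂.sup id := by
              rw [hCs, Finset.sup_union, Finset.sup_eq_union]
            have hsum_le : ∑ B ∈ 𝓐₂ ∪ 𝓒₂, mval (G ∪ rawW) B
                ≤ ∑ A ∈ 𝓐₂, mval G A + ∑ C ∈ 𝓒₂, mval rawW C := by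
              calc ∑ B ∈ 𝓐₂ ∪ 𝓒₂, mval (G ∪ rawW) B
                  ≤ ∑ B ∈ 𝓐₂, mval (G ∪ rawW) B + ∑ B ∈ 𝓒₂, mval (G ∪ rawW) B :=
                    sum_union_le _ _ _ (fun B => mval_nonneg hδ hGrawWP B)
                _ ≤ ∑ A ∈ 𝓐₂, mval G A + ∑ C ∈ 𝓒₂, mval rawW C :=
                    add_le_add
                      (Finset.sum_le_sum fun A _ =>
                        mval_superset hGne Finset.subset_union_left A)
                      (Finset.sum_le_sum fun C _ =>
                        mval_superset hrawWne Finset.subset_union_right C)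
            rw [hsupu] at helem
            linarith
          rw [hsplit2]
          linarith
        -- claim 2
        obtain ⟨G', hG'val, hG'ne⟩ :
            ∃ G' : Finset TT, G'.image vl = G ∧ G'.Nonempty := by
          refine ⟨G.attach.image (fun x => (⟨x.1, hG x.1 x.2⟩ : TT)), ?_, (hGne.attach).image _⟩
          rw [Finset.image_image]
          exact Finset.attach_image_val
        have claim2 : deltaT δ (G ∪ rawW) ≤ h G' + ∑ F ∈ 𝓖, h F := by
          have h1 : ΔT ((insert G' 𝓖).sup id) ≤ ∑ F ∈ insert G' 𝓖, h F := hhP.2 _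
          have h2 : ΔT ((insert G' 𝓖).sup id) = deltaT δ (G ∪ rawW) := by
            rw [Finset.sup_insert]
            show deltaT δ ((G' ⊔ W).image vl) = _
            rw [Finset.sup_eq_union, Finset.image_union, hG'val, hrawW]
          rw [h2] at h1
          have h3 := sum_insert_le h G' 𝓖 hhnn
          linarith
        have claim3 : h G' ≤ r G := by
          have h1 := hhle G'
          have h2 : r₀ G' = r G := by
            show (if G' = ∅ then 0 else r (G'.image vl)) = r G
            rw [if_neg hG'ne.ne_empty, hG'val]
          rwa [h2] at h1
        linarith

end
end
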